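/- arXiv:1708.06462 — 8 statements merged into one kernel-verified Lean document; each statement's English description precedes it below -/
import Mathlib

section
/- For any word w of length n over a finite alphabet, and for any position i in [1..n], the number of distinct squares whose last (rightmost) occurrence in w begins at position i is at most 2. -/
variable {α : Type*}

/-- `x` occurs in `w` beginning at (1-indexed) position `i`. -/
def OccursAt (x w : List α) (i : ℕ) : Prop :=
  ∃ u v : List α, w = u ++ x ++ v ∧ u.length + 1 = i

/-- The last (rightmost) occurrence of `x` in `w` begins at position `i`. -/
def LastOccAt (x w : List α) (i : ℕ) : Prop :=
  OccursAt x w i ∧ ∀ j, OccursAt x w j → j ≤ i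

/-- `e`-fold concatenation of the word `v`. -/
def listPow (v : List α) (e : ℕ) : List α :=
  (List.replicate e v).flatten

/-- A word is primitive if it is nonempty and not a nontrivial power. -/
def Primitive (w : List α) : Prop :=
  w ≠ [] ∧ ∀ (v : List α) (e : ℕ), 2 ≤ e → w ≠ listPow v e

/-- The set of distinct squares occurring in `w`. -/
def squareSet (w : List α) : Set (List α) :=
  {x | ∃ u : List α, u ≠ [] ∧ x = u ++ u ∧ x <:+: w}

/-- The number of distinct squares whose last occurrence in `w` begins at position `i`. -/
noncomputable def sCount (w : List α) (i : ℕ) : ℕ :=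
  {u : List α | u ≠ [] ∧ LastOccAt (u ++ u) w i}.ncard


section PeriodLemmas

variable {β : Type*}

/-- `f` has period `p` on the interval `[0, L)`. -/
def PerF (f : ℕ → β) (p L : ℕ) : Prop := ∀ m, m + p < L → f (m + p) = f m

lemma perF_mono {f : ℕ → β} {p L L' : ℕ} (h : PerF f p L) (hL : L' ≤ L) : PerF f p L' :=
  fun m hm => h m (lt_of_lt_of_le hm hL)

lemma perF_mul {f : ℕ → β} {g L : ℕ} (h : PerF f g L) :
    ∀ k m, m + g * k < L → f (m + g * k) = f m := by
  intro k
  induction k with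
  | zero => intro m _; simp
  | succ k ih =>
    intro m hm
    rw [Nat.mul_succ] at hm ⊢
    have h2 : (m + g * k) + g < L := by omega
    have e1 : f ((m + g * k) + g) = f (m + g * k) := h _ h2
    have e3 : m + (g * k + g) = (m + g * k) + g := by omega
    rw [e3, e1, ih m (by omega)]

/-- Weak Fine–Wilf theorem. -/
lemma fineWilf : ∀ (N p q L : ℕ) (f : ℕ → β), p + q ≤ N → 0 < p → 0 < q → p + q ≤ L →
    PerF f p L → PerF f q L → PerF f (Nat.gcd p q) L := by
  intro N
  induction N with
  | zero => intro p q L f h hp _ _ _ _; exact absurd h (by omega)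
  | succ N ih =>
    intro p q L f hN hp hq hL hP hQ
    rcases lt_trichotomy p q with h | h | h
    · have hgcd : Nat.gcd p (q - p) = Nat.gcd p q := by
        conv_rhs => rw [show q = (q - p) + p by omega]
        rw [Nat.gcd_add_self_right]
      have hQP : PerF f (q - p) L := by
        intro m hm
        by_cases hc : m + q < L
        · have e1 : f (m + q) = f m := hQ m hc
          have e2 : f (m + q) = f (m + (q - p)) := by
            rw [show m + q = (m + (q - p)) + p by omega]
            exact hP _ (by omega)
          rw [← e2, e1]
        · have e1 : f m = f (m - p) := by
            conv_lhs => rw [show m = (m - p) + p by omega]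
            exact hP _ (by omega)
          have e2 : f (m + (q - p)) = f (m - p) := by
            rw [show m + (q - p) = (m - p) + q by omega]
            exact hQ _ (by omega)
          rw [e2, e1]
      have := ih p (q - p) L f (by omega) hp (by omega) (by omega) hP hQP
      rwa [hgcd] at this
    · subst h; simpa [Nat.gcd_self] using hP
    · have hgcd : Nat.gcd (p - q) q = Nat.gcd p q := by
        conv_rhs => rw [show p = (p - q) + q by omega]
        rw [Nat.gcd_add_self_left]
      have hPQ : PerF f (p - q) L := by
        intro m hm
        by_cases hc : m + p < L
        · have e1 : f (m + p) = f m := hP m hc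
          have e2 : f (m + p) = f (m + (p - q)) := by
            rw [show m + p = (m + (p - q)) + q by omega]
            exact hQ _ (by omega)
          rw [← e2, e1]
        · have e1 : f m = f (m - q) := by
            conv_lhs => rw [show m = (m - q) + q by omega]
            exact hQ _ (by omega)
          have e2 : f (m + (p - q)) = f (m - q) := by
            rw [show m + (p - q) = (m - q) + p by omega]
            exact hP _ (by omega)
          rw [e2, e1]
      have := ih (p - q) q L f (by omega) (by omega) hq (by omega) hPQ hQ
      rwa [hgcd] at this

/-- Propagation of the small period from the prefix `[0,a)` to `[0,b)` using period `t`. -/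
lemma perF_extend {f : ℕ → β} {g t a b : ℕ} (ht : 0 < t) (hta : t + g ≤ a)
    (hu : PerF f g a) (hv : PerF f t b) : PerF f g b := by
  intro m
  induction m using Nat.strong_induction_on with
  | _ m ih =>
    intro hm
    by_cases hc : m + g < a
    · exact hu m hc
    · have hmt : t ≤ m := by omega
      have e1 : f m = f (m - t) := by
        conv_lhs => rw [show m = (m - t) + t by omega]
        exact hv _ (by omega)
      have e2 : f (m + g) = f ((m - t) + g) := by
        rw [show m + g = ((m - t) + g) + t by omega]
        exact hv _ (by omega)
      rw [e2, ih (m - t) (by omega) (by omega), ← e1]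

/-- Core combinatorial lemma: three square prefixes with `a < b < c < 2a` force
a new occurrence of the smallest square at offset `b - a`. -/
lemma core {f : ℕ → β} {a b c : ℕ} (hab : a < b) (hbc : b < c) (hca : c < 2*a)
    (hA : ∀ j, j + a < 2*a → f (j + a) = f j)
    (hB : ∀ j, j + b < 2*b → f (j + b) = f j)
    (hC : ∀ j, j + c < 2*c → f (j + c) = f j) :
    ∀ j, j < 2*a → f ((b - a) + j) = f (if j < a then j else j - a) := by
  have uPerS : PerF f (b - a) a := by
    intro m hm
    have e1 : f ((m + (b - a)) + a) = f (m + (b - a)) := hA _ (by omega)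
    have e2 : f (m + b) = f m := hB m (by omega)
    rw [show (m + (b - a)) + a = m + b from by omega] at e1
    rw [← e2, e1]
  have vPerT : PerF f (c - b) b := by
    intro m hm
    have e1 : f ((m + (c - b)) + b) = f (m + (c - b)) := hB _ (by omega)
    have e2 : f (m + c) = f m := hC m (by omega)
    rw [show (m + (c - b)) + b = m + c from by omega] at e1
    rw [← e2, e1]
  have uPerT : PerF f (c - b) a := perF_mono vPerT (le_of_lt hab)
  have hs : 0 < b - a := by omega
  have ht : 0 < c - b := by omega
  have hgs : Nat.gcd (b - a) (c - b) ∣ (b - a) := Nat.gcd_dvd_left _ _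
  have hgle : Nat.gcd (b - a) (c - b) ≤ b - a := Nat.le_of_dvd hs hgs
  have uPerG : PerF f (Nat.gcd (b - a) (c - b)) a :=
    fineWilf ((b - a) + (c - b)) (b - a) (c - b) a f le_rfl hs ht (by omega) uPerS uPerT
  have vPerG : PerF f (Nat.gcd (b - a) (c - b)) b :=
    perF_extend ht (by omega) uPerG vPerT
  have vPerS : ∀ m, m + (b - a) < b → f (m + (b - a)) = f m := by
    obtain ⟨k, hk⟩ := hgs
    intro m hm
    rw [hk] at hm ⊢
    exact perF_mul vPerG k m hm
  intro j hj
  by_cases hja : j < a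
  · simp only [if_pos hja]
    rw [Nat.add_comm]
    exact vPerS j (by omega)
  · simp only [if_neg hja]
    have e1 : f ((j - a) + b) = f (j - a) := hB _ (by omega)
    rw [show (b - a) + j = (j - a) + b from by omega]
    exact e1

end PeriodLemmas


section Glue
variable {α : Type*}

lemma only0_of_last {x w : List α} {i : ℕ} (h1 : 1 ≤ i) (hl : LastOccAt x w i) :
    x <+: w.drop (i-1) ∧ ∀ P Q, w.drop (i-1) = P ++ x ++ Q → P = [] := by
  obtain ⟨⟨p, q, hw, hp⟩, hlast⟩ := hl
  constructor
  · have hd : w.drop (i-1) = x ++ q := by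
      rw [hw, show i - 1 = p.length from by omega, List.append_assoc, List.drop_left]
    rw [hd]
    exact ⟨q, rfl⟩
  · intro P Q hPQ
    by_contra hP
    have hplen : 0 < P.length := List.length_pos_iff.mpr hP
    have hile : i - 1 ≤ w.length := by
      rw [hw]; simp; omega
    have hw2 : w = (w.take (i-1) ++ P) ++ x ++ Q := by
      conv_lhs => rw [← List.take_append_drop (i-1) w]
      rw [hPQ]; simp [List.append_assoc]
    have hj := hlast ((w.take (i-1) ++ P).length + 1) ⟨_, _, hw2, rfl⟩
    have hlen : (w.take (i-1)).length = i - 1 := by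
      rw [List.length_take]; omega
    rw [List.length_append, hlen] at hj
    omega


end Glue

section MainLemma
variable {α : Type*}

/-- Square prefix gives the pointwise period on `getD`. -/
lemma square_per (x S : List α) (d : α) (h : (x ++ x) <+: S) :
    ∀ j, j + x.length < 2 * x.length → S.getD (j + x.length) d = S.getD j d := by
  intro j hj
  have hjx : j < x.length := by omega
  have hlen : (x ++ x).length = x.length + x.length := by simp
  have hS : x.length + x.length ≤ S.length := by
    have := h.length_le; omega
  rw [List.getD_eq_getElem S d (by omega : j + x.length < S.length),
      List.getD_eq_getElem S d (by omega : j < S.length)]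
  rw [← h.getElem (by omega : j + x.length < (x ++ x).length),
      ← h.getElem (by omega : j < (x ++ x).length)]
  rw [List.getElem_append_right (by omega : x.length ≤ j + x.length),
      List.getElem_append_left hjx]
  simp

lemma three_squares (S u v W : List α) (hu : u ≠ [])
    (pu : (u ++ u) <+: S) (lu : ∀ P Q, S = P ++ (u ++ u) ++ Q → P = [])
    (pw : (W ++ W) <+: S)
    (hab : u.length < v.length) (hbc : v.length < W.length)
    (pv : (v ++ v) <+: S) : False := by
  have ha : 0 < u.length := List.length_pos_iff.mpr hu
  have hWS : W <+: S := (List.prefix_append W W).trans pw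
  have h2c : W.length + W.length ≤ S.length := by
    have := pw.length_le; simp at this; omega
  -- Step 1 : W.length < 2 * u.length
  have hca : W.length < 2 * u.length := by
    by_contra hge
    push_neg at hge
    have h1 : (u ++ u) <+: W :=
      List.prefix_of_prefix_length_le pu hWS (by simp; omega)
    obtain ⟨r, hr⟩ := h1
    obtain ⟨q, hq⟩ := pw
    have hdecomp : S = W ++ (u ++ u) ++ (r ++ q) := by
      rw [← hq, ← hr]
      simp [List.append_assoc]
    have hW0 := lu W (r ++ q) hdecomp
    have : W.length = 0 := by rw [hW0]; rfl
    omega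
  -- set up the pointwise function
  have hd : u ≠ [] := hu
  set d := u.head hd with hdd
  have hA := square_per u S d pu
  have hB := square_per v S d pv
  have hC := square_per W S d pw
  have key := core (f := fun j => S.getD j d) hab hbc (by omega)
      (fun j hj => hA j (by omega)) (fun j hj => hB j (by omega))
      (fun j hj => hC j (by omega))
  -- lengths
  have hblen : u.length + v.length ≤ S.length := by omega
  -- the new occurrence of u ++ u at position v.length - u.length
  have hocc : (S.drop (v.length - u.length)).take (2 * u.length) = u ++ u := by
    apply List.ext_getElem
    · simp [List.length_take, List.length_drop]
      omega
    · intro j h1 h2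
      have hj2a : j < 2 * u.length := by
        simp [List.length_take, List.length_drop] at h1
        omega
      rw [List.getElem_take, List.getElem_drop]
      have hSj : (v.length - u.length) + j < S.length := by omega
      have e1 : S[(v.length - u.length) + j] = S.getD ((v.length - u.length) + j) d :=
        (List.getD_eq_getElem S d hSj).symm
      rw [e1, key j hj2a]
      by_cases hja : j < u.length
      · rw [if_pos hja, List.getElem_append_left hja]
        have : S.getD j d = S[j] := List.getD_eq_getElem S d (by omega)
        rw [this, ← pu.getElem (by simp; omega : j < (u ++ u).length),
            List.getElem_append_left hja]
      · rw [if_neg hja, List.getElem_append_right (by omega : u.length ≤ j)]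
        have : S.getD (j - u.length) d = S[j - u.length] := List.getD_eq_getElem S d (by omega)
        rw [this, ← pu.getElem (by simp; omega : j - u.length < (u ++ u).length),
            List.getElem_append_left (by omega : j - u.length < u.length)]
  have hdecomp : S = (S.take (v.length - u.length)) ++ (u ++ u) ++
      (S.drop ((v.length - u.length) + 2 * u.length)) := by
    conv_lhs => rw [← List.take_append_drop (v.length - u.length) S]
    rw [List.append_assoc]
    congr 1
    conv_lhs => rw [← List.take_append_drop (2 * u.length) (S.drop (v.length - u.length))]
    rw [hocc, List.drop_drop]
  have := lu _ _ hdecomp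
  have hlen : (S.take (v.length - u.length)).length = v.length - u.length := by
    rw [List.length_take]; omega
  rw [this] at hlen
  simp at hlen
  omega

end MainLemma


/-- At most two distinct squares have their last occurrence beginning at any position. -/
theorem stmt0 {α : Type*} [Fintype α] (w : List α) (i : ℕ)
    (h1 : 1 ≤ i) (h2 : i ≤ w.length) :
    sCount w i ≤ 2 := by
  by_contra hlt
  push_neg at hlt
  rcases Set.finite_or_infinite {u : List α | u ≠ [] ∧ LastOccAt (u ++ u) w i} with hfin | hinf
  swap
  · rw [sCount, hinf.ncard] at hlt; omega
  rw [sCount, Set.two_lt_ncard_iff hfin] at hlt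
  obtain ⟨x, y, z, hx, hy, hz, hxy, hxz, hyz⟩ := hlt
  simp only [Set.mem_setOf_eq] at hx hy hz
  obtain ⟨hx0, hxL⟩ := hx
  obtain ⟨hy0, hyL⟩ := hy
  obtain ⟨hz0, hzL⟩ := hz
  obtain ⟨px, lx⟩ := only0_of_last h1 hxL
  obtain ⟨py, ly⟩ := only0_of_last h1 hyL
  obtain ⟨pz, lz⟩ := only0_of_last h1 hzL
  set S := w.drop (i - 1) with hS
  -- length injectivity
  have leninj : ∀ p q : List α, (p ++ p) <+: S → (q ++ q) <+: S → p.length = q.length → p = q := by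
    intro p q hp hq hlen
    have h1' : (p ++ p) <+: (q ++ q) :=
      List.prefix_of_prefix_length_le hp hq (by simp [hlen])
    have h2' : p ++ p = q ++ q := h1'.eq_of_length (by simp [hlen])
    exact (List.append_inj h2' hlen).1
  have dxy : x.length ≠ y.length := fun h => hxy (leninj x y px py h)
  have dxz : x.length ≠ z.length := fun h => hxz (leninj x z px pz h)
  have dyz : y.length ≠ z.length := fun h => hyz (leninj y z py pz h)
  rcases Nat.lt_trichotomy x.length y.length with h1' | h1' | h1' <;>
    rcases Nat.lt_trichotomy y.length z.length with h2' | h2' | h2' <;>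
      rcases Nat.lt_trichotomy x.length z.length with h3' | h3' | h3'
  all_goals first
    | (exact absurd h1' dxy) | (exact absurd h2' dyz) | (exact absurd h3' dxz)
    | (exact absurd h1'.symm dxy) | (exact absurd h2'.symm dyz) | (exact absurd h3'.symm dxz)
    | (exact three_squares S x y z hx0 px lx pz h1' h2' py)
    | (exact three_squares S x z y hx0 px lx py h3' (by omega) pz)
    | (exact three_squares S y x z hy0 py ly pz (by omega) h3' px)
    | (exact three_squares S y z x hy0 py ly px h2' (by omega) pz)
    | (exact three_squares S z x y hz0 pz lz py (by omega) h1' px)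
    | (exact three_squares S z y x hz0 pz lz px (by omega) (by omega) py)
    | omega
end

section
/- A nonempty word w is primitive (i.e., not a nontrivial power v^e with e ≥ 2) if and only if w is not an interior factor of ww, i.e., ww = xwy implies x = ε or y = ε. -/
variable {α : Type*}

theorem listPow_add (v : List α) (k m : ℕ) :
    listPow v (k + m) = listPow v k ++ listPow v m := by
  rw [listPow, listPow, listPow, List.replicate_add]; exact List.flatten_append

theorem listPow_zero (v : List α) : listPow v 0 = [] := rfl

theorem listPow_one (v : List α) : listPow v 1 = v := by simp [listPow]

theorem comm_eq : ∀ n (a b : List α), a.length + b.length = n → a ++ b = b ++ a →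
    ∃ t k m, a = listPow t k ∧ b = listPow t m := by
  intro n
  induction n using Nat.strong_induction_on with
  | _ n ih =>
    intro a b hn h
    rcases le_or_gt a.length b.length with hle | hlt
    · rcases eq_or_ne a [] with rfl | ha
      · exact ⟨b, 0, 1, rfl, (listPow_one b).symm⟩
      · have hpre : a <+: b := by
          have h1 : a <+: b ++ a := by rw [← h]; exact List.prefix_append a b
          exact List.prefix_of_prefix_length_le h1 (List.prefix_append b a) hle
        obtain ⟨c, rfl⟩ := hpre
        have h2 : a ++ c = c ++ a := by
          have : a ++ (a ++ c) = a ++ (c ++ a) := by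
            simpa [List.append_assoc] using h
          exact List.append_cancel_left this
        have hlen : a.length + c.length < n := by
          have := List.length_pos_iff.2 ha
          simp at hn; omega
        obtain ⟨t, k, m, hA, hC⟩ := ih _ hlen a c rfl h2
        exact ⟨t, k, k + m, hA, by rw [listPow_add, hA, hC]⟩
    · rcases eq_or_ne b [] with rfl | hb
      · exact ⟨a, 1, 0, (listPow_one a).symm, rfl⟩
      · have hpre : b <+: a := by
          have h1 : b <+: a ++ b := by rw [h]; exact List.prefix_append b a
          exact List.prefix_of_prefix_length_le h1 (List.prefix_append a b) hlt.le
        obtain ⟨c, rfl⟩ := hpre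
        have h2 : b ++ c = c ++ b := by
          have : b ++ (b ++ c) = b ++ (c ++ b) := by
            simpa [List.append_assoc] using h.symm
          exact List.append_cancel_left this
        have hlen : b.length + c.length < n := by
          have := List.length_pos_iff.2 hb
          simp at hn; omega
        obtain ⟨t, k, m, hB, hC⟩ := ih _ hlen b c rfl h2
        exact ⟨t, k + m, k, by rw [listPow_add, hB, hC], hB⟩

/-- A nonempty word is primitive iff it is not an interior factor of its square. -/
theorem stmt1 {α : Type*} (w : List α) (hw : w ≠ []) :
    Primitive w ↔ ∀ x y : List α, w ++ w = x ++ w ++ y → x = [] ∨ y = [] := by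
  constructor
  · rintro ⟨-, hp⟩ x y heq
    by_contra hc
    push_neg at hc
    obtain ⟨hx, hy⟩ := hc
    have hlen : x.length + y.length = w.length := by
      have := congrArg List.length heq
      simp at this; omega
    have hxlt : x.length < w.length := by
      have := List.length_pos_iff.2 hy; omega
    have hxw : x <+: w := by
      have h1 : x <+: w ++ w := by
        rw [heq, List.append_assoc]; exact List.prefix_append x _
      exact List.prefix_of_prefix_length_le h1 (List.prefix_append w w) hxlt.le
    obtain ⟨z, rfl⟩ := hxw
    have hz : z ≠ [] := by
      rintro rfl; simp at hxlt
    -- heq : (x++z)++(x++z) = x ++ (x++z) ++ y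
    have h2 : (z ++ x) ++ z = (x ++ z) ++ y := by
      have : x ++ ((z ++ x) ++ z) = x ++ ((x ++ z) ++ y) := by
        simpa [List.append_assoc] using heq
      exact List.append_cancel_left this
    have h3 : z ++ x = x ++ z :=
      (List.append_inj h2 (by simp; omega)).1
    obtain ⟨t, k, m, hZ, hX⟩ := comm_eq _ z x rfl h3
    have hk : 1 ≤ k := by
      rcases Nat.eq_zero_or_pos k with rfl | h
      · exact absurd hZ hz
      · exact h
    have hm : 1 ≤ m := by
      rcases Nat.eq_zero_or_pos m with rfl | h
      · exact absurd hX hx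
      · exact h
    exact hp t (m + k) (by omega) (by rw [listPow_add, ← hX, ← hZ])
  · intro h
    refine ⟨hw, ?_⟩
    rintro v e he rfl
    obtain ⟨f, rfl⟩ : ∃ f, e = f + 2 := ⟨e - 2, by omega⟩
    have hv : v ≠ [] := by
      rintro rfl
      exact hw (by simp [listPow])
    have hsucc : ∀ n, listPow v (n + 1) = v ++ listPow v n := by
      intro n
      simp [listPow, List.replicate_succ]
    have heq : listPow v (f + 2) ++ listPow v (f + 2)
        = v ++ listPow v (f + 2) ++ listPow v (f + 1) := by
      rw [List.append_assoc, ← listPow_add v (f+2) (f+1), ← hsucc, ← listPow_add]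
      congr 1
    rcases h _ _ heq with h1 | h1
    · exact hv h1
    · apply hv
      have : listPow v (f + 1) = v ++ listPow v f := by
        rw [show f + 1 = 1 + f by omega, listPow_add, listPow_one]
      rw [this] at h1
      exact (List.append_eq_nil_iff.1 h1).1
end

section
/- Let m ≥ 1 and w_m = (a^{m-1} b a a^{m-1} b a^{m-1} b a)^2 a^{m-1} over alphabet {a,b}. For every i in [1..m], both the square u_i^2 with u_i = a^{m-i} b a a^{m-1} b a^{i-1} (of length 2m+1) and the square U_i^2 with U_i = a^{m-i} b a a^{m-1} b a^{m-1} b a^i (of length 3m+2) occur in w_m at position i, and neither u_i^2 nor U_i^2 occurs in w_m at any position greater than i. -/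
variable {α : Type*}

/-- The word U₁ = a^{m-1} b a a^{m-1} b a^{m-1} b a. -/
def bigU (a b : α) (m : ℕ) : List α :=
  List.replicate (m-1) a ++ [b, a] ++ List.replicate (m-1) a ++ [b] ++
    List.replicate (m-1) a ++ [b, a]

/-- The word wₘ = (a^{m-1} b a a^{m-1} b a^{m-1} b a)² a^{m-1}. -/
def wm (a b : α) (m : ℕ) : List α :=
  bigU a b m ++ bigU a b m ++ List.replicate (m-1) a

/-- uᵢ = a^{m-i} b a a^{m-1} b a^{i-1}. -/
def ui (a b : α) (m i : ℕ) : List α :=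
  List.replicate (m-i) a ++ [b, a] ++ List.replicate (m-1) a ++ [b] ++
    List.replicate (i-1) a

/-- Uᵢ = a^{m-i} b a a^{m-1} b a^{m-1} b a^i. -/
def Ui (a b : α) (m i : ℕ) : List α :=
  List.replicate (m-i) a ++ [b, a] ++ List.replicate (m-1) a ++ [b] ++
    List.replicate (m-1) a ++ [b] ++ List.replicate i a

namespace S6
def Wd (a b : α) : List ℕ → ℕ → List α
  | [], t => List.replicate t a
  | k :: ks, t => List.replicate k a ++ b :: Wd a b ks t

def Wf (a b : α) : List ℕ → ℕ → ℕ → Option α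
  | [], t, n => if n < t then some a else none
  | k :: ks, t, n => if n < k then some a else if n = k then some b else Wf a b ks t (n - (k+1))

lemma replicate_append_Wd (a b : α) (j k : ℕ) (ks t) :
    List.replicate j a ++ Wd a b (k :: ks) t = Wd a b ((j + k) :: ks) t := by
  simp [Wd, ← List.append_assoc, ← List.replicate_add]

lemma Wd_append_cons (a b : α) (ks : List ℕ) (t k' : ℕ) (ks' : List ℕ) (t' : ℕ) :
    Wd a b ks t ++ Wd a b (k' :: ks') t' = Wd a b (ks ++ (t + k') :: ks') t' := by
  induction ks with
  | nil => simpa [Wd] using replicate_append_Wd a b t k' ks' t'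
  | cons k ks ih =>
    calc Wd a b (k::ks) t ++ Wd a b (k' :: ks') t'
        = List.replicate k a ++ b :: (Wd a b ks t ++ Wd a b (k' :: ks') t') := by
          simp [Wd]
      _ = _ := by rw [ih]; simp [Wd]

lemma Wd_append_replicate (a b : α) (ks : List ℕ) (t s : ℕ) :
    Wd a b ks t ++ List.replicate s a = Wd a b ks (t + s) := by
  induction ks with
  | nil => simp [Wd, ← List.replicate_add]
  | cons k ks ih => simp [Wd, List.append_assoc, ih]

lemma Wd_getElem? (a b : α) (ks : List ℕ) (t n : ℕ) : (Wd a b ks t)[n]? = Wf a b ks t n := by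
  induction ks generalizing n with
  | nil => simp [Wd, Wf, List.getElem?_replicate]
  | cons k ks ih =>
    simp only [Wd, Wf]
    rcases lt_or_ge n k with h | h
    · rw [List.getElem?_append_left (by simpa using h), if_pos h]
      simp [List.getElem?_replicate, h]
    · rw [List.getElem?_append_right (by simpa using h)]
      simp only [List.length_replicate]
      rcases eq_or_lt_of_le h with rfl | h2
      · simp
      · rw [if_neg (by omega), if_neg (by omega)]
        have hnk : n - k = (n - k - 1) + 1 := by omega
        rw [hnk, List.getElem?_cons_succ, ih]
        congr 1
variable (a b : α) (m i : ℕ)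

lemma rep_m (hm : 1 ≤ m) : List.replicate m a = a :: List.replicate (m-1) a := by
  conv_lhs => rw [show m = (m-1)+1 by omega]
  rw [List.replicate_succ]

lemma ui_eq (hm : 1 ≤ m) : ui a b m i = Wd a b [m - i, m] (i - 1) := by
  simp [ui, Wd, rep_m a m hm, List.append_assoc]

lemma Ui_eq (hm : 1 ≤ m) : Ui a b m i = Wd a b [m - i, m, m - 1] i := by
  simp [Ui, Wd, rep_m a m hm, List.append_assoc]

lemma bigU_eq (hm : 1 ≤ m) : bigU a b m = Wd a b [m - 1, m, m - 1] 1 := by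
  simp [bigU, Wd, rep_m a m hm, List.append_assoc, List.replicate_one]

lemma wm_eq (hm : 1 ≤ m) : wm a b m = Wd a b [m-1, m, m-1, m, m, m-1] m := by
  have h1 : bigU a b m ++ List.replicate (m-1) a = Wd a b [m-1, m, m-1] m := by
    rw [bigU_eq a b m hm, Wd_append_replicate]
    congr 1
    omega
  have : wm a b m = bigU a b m ++ (bigU a b m ++ List.replicate (m-1) a) := by
    simp [wm]
  rw [this, h1, bigU_eq a b m hm, Wd_append_cons,
    show (1:ℕ)+(m-1) = m by omega]
  simp

lemma uisq_eq (hi : 1 ≤ i) (him : i ≤ m) :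
    ui a b m i ++ ui a b m i = Wd a b [m - i, m, m - 1, m] (i - 1) := by
  rw [ui_eq a b m i (by omega), Wd_append_cons,
    show (i-1)+(m-i) = m-1 by omega]
  simp

lemma Uisq_eq (hi : 1 ≤ i) (him : i ≤ m) :
    Ui a b m i ++ Ui a b m i = Wd a b [m - i, m, m - 1, m, m, m - 1] i := by
  rw [Ui_eq a b m i (by omega), Wd_append_cons,
    show i+(m-i) = m by omega]
  simp

def Bq : List ℕ → ℕ → ℕ → Prop
  | [], _, _ => False
  | k :: ks, c, n => n = c + k ∨ Bq ks (c + k + 1) n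

instance Bq.dec : ∀ (ks : List ℕ) (c n : ℕ), Decidable (Bq ks c n)
  | [], _, _ => by unfold Bq; infer_instance
  | k :: ks, c, n => by
      unfold Bq
      have := Bq.dec ks (c + k + 1) n
      infer_instance

lemma Bq_ge {ks : List ℕ} {c n : ℕ} (h : Bq ks c n) : c ≤ n := by
  induction ks generalizing c with
  | nil => exact absurd h id
  | cons k ks ih =>
    rcases h with h | h
    · omega
    · have := ih h; omega

lemma Wf_char (ks : List ℕ) (t : ℕ) : ∀ c n, n < ks.sum + ks.length + t →
    Wf a b ks t n = some (if Bq ks c (c + n) then b else a) := by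
  induction ks with
  | nil =>
    intro c n hn
    rw [if_congr (show Bq [] c (c + n) ↔ False from Iff.rfl) rfl rfl]
    simp only [Wf, Bq, if_false]
    rw [if_pos (by simp at hn; omega)]
  | cons k ks ih =>
    intro c n hn
    rw [if_congr (show Bq (k :: ks) c (c + n) ↔ (c + n = c + k ∨ Bq ks (c + k + 1) (c + n)) from Iff.rfl) rfl rfl]
    simp only [Wf, Bq]
    rcases lt_trichotomy n k with h | h | h
    · rw [if_pos h, if_neg ?_]
      rintro (h1 | h1)
      · omega
      · have := Bq_ge h1; omega
    · subst h
      rw [if_neg (by omega), if_pos rfl, if_pos (by omega)]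
    · rw [if_neg (by omega), if_neg (by omega)]
      have htot : n - (k+1) < ks.sum + ks.length + t := by
        simp only [List.sum_cons, List.length_cons] at hn; omega
      rw [ih (c + k + 1) (n - (k+1)) htot]
      congr 1
      have h2 : c + k + 1 + (n - (k + 1)) = c + n := by omega
      rw [h2]
      have hiff : Bq ks (c + k + 1) (c + n) ↔ (c + n = c + k ∨ Bq ks (c + k + 1) (c + n)) := by
        constructor
        · intro hq; exact Or.inr hq
        · rintro (hq | hq)
          · omega
          · exact hq
      rw [if_congr hiff rfl rfl]

lemma wm_char (hm : 1 ≤ m) (n : ℕ) (hn : n < 7*m+3) :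
    (wm a b m)[n]? = some (if n+1 = m ∨ n = 2*m ∨ n = 3*m ∨ n = 4*m+1 ∨ n = 5*m+2 ∨ n = 6*m+2
      then b else a) := by
  rw [wm_eq a b m hm, Wd_getElem?, Wf_char a b _ _ 0 _ (by simp only [List.sum_cons, List.sum_nil, List.length_cons, List.length_nil]; omega)]
  congr 1
  rw [if_congr (show Bq [m-1, m, m-1, m, m, m-1] 0 (0 + n) ↔ (n+1 = m ∨ n = 2*m ∨ n = 3*m ∨ n = 4*m+1 ∨ n = 5*m+2 ∨ n = 6*m+2) by simp only [Bq, or_false]; omega) rfl rfl]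

lemma uisq_char (hi : 1 ≤ i) (him : i ≤ m) (k : ℕ) (hk : k < 4*m+2) :
    (ui a b m i ++ ui a b m i)[k]? =
      some (if k+i = m ∨ k+i = 2*m+1 ∨ k+i = 3*m+1 ∨ k+i = 4*m+2 then b else a) := by
  rw [uisq_eq a b m i hi him, Wd_getElem?, Wf_char a b _ _ 0 _ (by simp only [List.sum_cons, List.sum_nil, List.length_cons, List.length_nil]; omega)]
  congr 1
  rw [if_congr (show Bq [m-i, m, m-1, m] 0 (0 + k) ↔ (k+i = m ∨ k+i = 2*m+1 ∨ k+i = 3*m+1 ∨ k+i = 4*m+2) by simp only [Bq, or_false]; omega) rfl rfl]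

lemma Uisq_char (hi : 1 ≤ i) (him : i ≤ m) (k : ℕ) (hk : k < 6*m+4) :
    (Ui a b m i ++ Ui a b m i)[k]? =
      some (if k+i = m ∨ k+i = 2*m+1 ∨ k+i = 3*m+1 ∨ k+i = 4*m+2 ∨ k+i = 5*m+3 ∨ k+i = 6*m+3
        then b else a) := by
  rw [Uisq_eq a b m i hi him, Wd_getElem?, Wf_char a b _ _ 0 _ (by simp only [List.sum_cons, List.sum_nil, List.length_cons, List.length_nil]; omega)]
  congr 1
  rw [if_congr (show Bq [m-i, m, m-1, m, m, m-1] 0 (0 + k) ↔ (k+i = m ∨ k+i = 2*m+1 ∨ k+i = 3*m+1 ∨ k+i = 4*m+2 ∨ k+i = 5*m+3 ∨ k+i = 6*m+3) by simp only [Bq, or_false]; omega) rfl rfl]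

lemma ite_inj {a b : α} (hab : a ≠ b) {P Q : Prop} [Decidable P] [Decidable Q]
    (h : (if P then b else a) = (if Q then b else a)) : P ↔ Q := by
  by_cases hP : P <;> by_cases hQ : Q <;> simp [hP, hQ] at h ⊢ <;>
    first | exact hab h.symm | exact hab h

lemma occursAt_getElem {x w : List α} {j : ℕ} (h : OccursAt x w j) :
    ∃ p, j = p + 1 ∧ p + x.length ≤ w.length ∧ ∀ k < x.length, w[p + k]? = x[k]? := by
  obtain ⟨u, v, hw, hu⟩ := h
  subst hw
  refine ⟨u.length, by omega, by simp only [List.length_append]; omega, ?_⟩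
  intro k hk
  rw [List.append_assoc, List.getElem?_append_right (by omega),
    List.getElem?_append_left (by omega)]
  congr 1
  omega

lemma wm_len (hm : 1 ≤ m) : (wm a b m).length = 7*m+3 := by
  simp [wm, bigU]
  omega

lemma uisq_len (hi : 1 ≤ i) (him : i ≤ m) :
    (ui a b m i ++ ui a b m i).length = 4*m+2 := by
  simp [ui]
  omega

lemma Uisq_len (hi : 1 ≤ i) (him : i ≤ m) :
    (Ui a b m i ++ Ui a b m i).length = 6*m+4 := by
  simp [Ui]
  omega
end S6

/-- For each i ∈ [1..m], the squares uᵢ² (length 2(2m+1)) and Uᵢ² (length 2(3m+2))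
    occur in wₘ at position i and at no later position. -/
theorem stmt6 {α : Type*} (a b : α) (hab : a ≠ b) (m : ℕ) (hm : 1 ≤ m) :
    ∀ i : ℕ, 1 ≤ i → i ≤ m →
      (ui a b m i).length = 2 * m + 1 ∧
      (Ui a b m i).length = 3 * m + 2 ∧
      OccursAt (ui a b m i ++ ui a b m i) (wm a b m) i ∧
      OccursAt (Ui a b m i ++ Ui a b m i) (wm a b m) i ∧
      (∀ j : ℕ, i < j → ¬ OccursAt (ui a b m i ++ ui a b m i) (wm a b m) j) ∧
      (∀ j : ℕ, i < j → ¬ OccursAt (Ui a b m i ++ Ui a b m i) (wm a b m) j) := by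
  intro i hi him
  have hui_len : (ui a b m i).length = 2 * m + 1 := by
    simp only [ui, List.length_append, List.length_replicate, List.length_cons,
      List.length_nil]
    omega
  have hUi_len : (Ui a b m i).length = 3 * m + 2 := by
    simp only [Ui, List.length_append, List.length_replicate, List.length_cons,
      List.length_nil]
    omega
  refine ⟨hui_len, hUi_len, ?_, ?_, ?_, ?_⟩
  · -- occurrence of ui² at position i
    refine ⟨List.replicate (i-1) a, S6.Wd a b [m+1-i, m-1] m, ?_,
      by simp only [List.length_replicate]; omega⟩
    have key : (List.replicate (i-1) a ++ S6.Wd a b [m-i, m, m-1, m] (i-1)) ++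
        S6.Wd a b [m+1-i, m-1] m = S6.Wd a b [m-1, m, m-1, m, m, m-1] m := by
      rw [List.append_assoc, S6.Wd_append_cons, show (i-1)+(m+1-i) = m by omega]
      simp only [List.cons_append, List.nil_append]
      rw [S6.replicate_append_Wd, show (i-1)+(m-i) = m-1 by omega]
    rw [S6.wm_eq a b m hm, S6.uisq_eq a b m i hi him, ← key]
  · -- occurrence of Ui² at position i
    refine ⟨List.replicate (i-1) a, List.replicate (m-i) a, ?_,
      by simp only [List.length_replicate]; omega⟩
    have key : (List.replicate (i-1) a ++ S6.Wd a b [m-i, m, m-1, m, m, m-1] i) ++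
        List.replicate (m-i) a = S6.Wd a b [m-1, m, m-1, m, m, m-1] m := by
      rw [List.append_assoc, S6.Wd_append_replicate, show i+(m-i) = m by omega,
        S6.replicate_append_Wd, show (i-1)+(m-i) = m-1 by omega]
    rw [S6.wm_eq a b m hm, S6.Uisq_eq a b m i hi him, ← key]
  · -- no later occurrence of ui²
    intro j hj hocc
    obtain ⟨p, hp, hlen, hcorr⟩ := S6.occursAt_getElem hocc
    rw [S6.uisq_len a b m i hi him] at hlen hcorr
    rw [S6.wm_len a b m hm] at hlen
    have key : ∀ k, k < 4*m+2 →
        (((p+k)+1 = m ∨ p+k = 2*m ∨ p+k = 3*m ∨ p+k = 4*m+1 ∨ p+k = 5*m+2 ∨ p+k = 6*m+2) ↔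
          (k+i = m ∨ k+i = 2*m+1 ∨ k+i = 3*m+1 ∨ k+i = 4*m+2)) := by
      intro k hk
      have h := hcorr k hk
      rw [S6.wm_char a b m hm _ (by omega), S6.uisq_char a b m i hi him k hk] at h
      exact S6.ite_inj hab (Option.some.inj h)
    obtain ⟨k1, hk1⟩ : ∃ k, k + i = m := ⟨m-i, by omega⟩
    obtain ⟨k2, hk2⟩ : ∃ k, k + i = 2*m+1 := ⟨2*m+1-i, by omega⟩
    obtain ⟨k3, hk3⟩ : ∃ k, k + i = 3*m+1 := ⟨3*m+1-i, by omega⟩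
    obtain ⟨k4, hk4⟩ : ∃ k, k + i = 4*m+2 := ⟨4*m+2-i, by omega⟩
    have h1 := key k1 (by omega)
    have h2 := key k2 (by omega)
    have h3 := key k3 (by omega)
    have h4 := key k4 (by omega)
    omega
  · -- no later occurrence of Ui²
    intro j hj hocc
    obtain ⟨p, hp, hlen, hcorr⟩ := S6.occursAt_getElem hocc
    rw [S6.Uisq_len a b m i hi him] at hlen hcorr
    rw [S6.wm_len a b m hm] at hlen
    have key : ∀ k, k < 6*m+4 →
        (((p+k)+1 = m ∨ p+k = 2*m ∨ p+k = 3*m ∨ p+k = 4*m+1 ∨ p+k = 5*m+2 ∨ p+k = 6*m+2) ↔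
          (k+i = m ∨ k+i = 2*m+1 ∨ k+i = 3*m+1 ∨ k+i = 4*m+2 ∨ k+i = 5*m+3 ∨ k+i = 6*m+3)) := by
      intro k hk
      have h := hcorr k hk
      rw [S6.wm_char a b m hm _ (by omega), S6.Uisq_char a b m i hi him k hk] at h
      exact S6.ite_inj hab (Option.some.inj h)
    obtain ⟨k1, hk1⟩ : ∃ k, p + k + 1 = m := ⟨m-1-p, by omega⟩
    have h1 := key k1 (by omega)
    omega
end

section
/- Let m ≥ 1 and let w be a word of length 7m+3 over an alphabet such that for every i in [1..m], there exist two squares of lengths 4m+2 and 6m+4 respectively whose last occurrences in w both begin at position i. Then, up to a renaming of letters, w = (a^{m-1} b a a^{m-1} b a^{m-1} b a)^2 a^{m-1} for distinct letters a and b. -/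
variable {α : Type*}

/-- A square occurrence forces a periodicity relation on `getElem?`. -/
lemma sq_eq (x w : List α) (i : ℕ) (h : OccursAt (x ++ x) w i) (k : ℕ)
    (hk : k < x.length) :
    w[(i-1)+k]? = w[(i-1)+x.length+k]? := by
  obtain ⟨u, v, hw, hu⟩ := h
  have hu' : u.length = i - 1 := by omega
  subst hw
  rw [List.append_assoc, List.append_assoc]
  have L : (u ++ (x ++ (x ++ v)))[u.length + k]? = x[k]? := by
    rw [List.getElem?_append_right (Nat.le_add_right _ _), Nat.add_sub_cancel_left,
      List.getElem?_append_left hk]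
  have R : (u ++ (x ++ (x ++ v)))[u.length + (x.length + k)]? = x[k]? := by
    rw [List.getElem?_append_right (Nat.le_add_right _ _), Nat.add_sub_cancel_left,
      List.getElem?_append_right (Nat.le_add_right _ _), Nat.add_sub_cancel_left,
      List.getElem?_append_left hk]
  rw [show i - 1 + k = u.length + k by omega,
      show i - 1 + x.length + k = u.length + (x.length + k) by omega, L, R]

lemma getElem?_cons' (c : α) (l : List α) (n : ℕ) :
    (c :: l)[n]? = if n = 0 then some c else l[n-1]? := by
  cases n <;> simp

lemma bigU_length (a b : α) (m : ℕ) (hm : 1 ≤ m) : (bigU a b m).length = 3*m+2 := by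
  simp [bigU]; omega

set_option maxHeartbeats 1000000 in
lemma bigU_getElem? (a b : α) (m : ℕ) (hm : 1 ≤ m) (p : ℕ) :
    (bigU a b m)[p]? = if p < 3*m+2 then
      some (if p = m-1 ∨ p = 2*m ∨ p = 3*m then b else a) else none := by
  unfold bigU
  simp only [List.append_assoc, List.cons_append, List.nil_append]
  simp only [List.getElem?_append, getElem?_cons', List.getElem?_replicate,
    List.length_replicate]
  split_ifs <;> first | rfl | omega

set_option maxHeartbeats 1000000 in
lemma wm_getElem? (a b : α) (m : ℕ) (hm : 1 ≤ m) (p : ℕ) :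
    (wm a b m)[p]? = if p < 7*m+3 then
      some (if p = m-1 ∨ p = 2*m ∨ p = 3*m ∨ p = 4*m+1 ∨ p = 5*m+2 ∨ p = 6*m+2
        then b else a) else none := by
  unfold wm
  simp only [List.getElem?_append, List.length_append, bigU_length a b m hm,
    bigU_getElem? a b m hm, List.getElem?_replicate, List.length_replicate]
  split_ifs <;> first | rfl | omega

/-- If w has length 7m+3 and every position i ∈ [1..m] begins the last occurrences of
    two squares of lengths 4m+2 and 6m+4, then w is wₘ up to a renaming of letters. -/
theorem stmt7 {α : Type*} (m : ℕ) (hm : 1 ≤ m) (w : List α)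
    (hlen : w.length = 7 * m + 3)
    (hfs : ∀ i : ℕ, 1 ≤ i → i ≤ m →
      ∃ x y : List α, x ≠ [] ∧ y ≠ [] ∧
        (x ++ x).length = 4 * m + 2 ∧ (y ++ y).length = 6 * m + 4 ∧
        LastOccAt (x ++ x) w i ∧ LastOccAt (y ++ y) w i) :
    ∃ a b : α, a ≠ b ∧ w = wm a b m := by
  -- the long period 3m+2
  have hP : ∀ p, p ≤ 4*m → w[p]? = w[p + (3*m+2)]? := by
    intro p hp
    set j := p - (3*m+1) with hj
    obtain ⟨x, y, hx, hy, hxl, hyl, hxo, hyo⟩ := hfs (j+1) (by omega) (by omega)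
    have hylen : y.length = 3*m+2 := by
      simp [List.length_append] at hyl; omega
    have h := sq_eq y w (j+1) hyo.1 (p - j) (by omega)
    rw [hylen] at h
    have e1 : j + 1 - 1 + (p - j) = p := by omega
    have e2 : j + 1 - 1 + (3*m+2) + (p - j) = p + (3*m+2) := by omega
    rw [e1, e2] at h
    exact h
  -- the short period 2m+1 on the prefix
  have hQ : ∀ p, p + 1 ≤ 3*m → w[p]? = w[p + (2*m+1)]? := by
    intro p hp
    set j := p - (2*m) with hj
    obtain ⟨x, y, hx, hy, hxl, hyl, hxo, hyo⟩ := hfs (j+1) (by omega) (by omega)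
    have hxlen : x.length = 2*m+1 := by
      simp [List.length_append] at hxl; omega
    have h := sq_eq x w (j+1) hxo.1 (p - j) (by omega)
    rw [hxlen] at h
    have e1 : j + 1 - 1 + (p - j) = p := by omega
    have e2 : j + 1 - 1 + (2*m+1) + (p - j) = p + (2*m+1) := by omega
    rw [e1, e2] at h
    exact h
  -- derived period m+1
  have hS2 : ∀ p, p + 2 ≤ 2*m → w[p]? = w[p + (m+1)]? := by
    intro p hp
    have h1 := hP p (by omega)
    have h2 := hQ (p + (m+1)) (by omega)
    have e : p + (m+1) + (2*m+1) = p + (3*m+2) := by ring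
    rw [e] at h2
    exact h1.trans h2.symm
  -- derived period m
  have hS1 : ∀ p, p + 2 ≤ m → w[p]? = w[p + m]? := by
    intro p hp
    have h1 := hQ p (by omega)
    have h2 := hS2 (p + m) (by omega)
    have e : p + m + (m+1) = p + (2*m+1) := by ring
    rw [e] at h2
    exact h1.trans h2.symm
  -- the run of equal letters
  have hE : ∀ j, j + 1 ≤ m → w[m + j]? = w[m]? := by
    intro j
    induction j with
    | zero => intro _; rfl
    | succ n ih =>
      intro h
      have h1 := hS2 n (by omega)
      have h2 := hS1 n (by omega)
      have e1 : n + (m+1) = m + (n+1) := by ring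
      have e2 : n + m = m + n := by ring
      rw [e1] at h1
      rw [e2] at h2
      rw [← h1, h2, ih (by omega)]
  obtain ⟨a, ha⟩ : ∃ a, w[m]? = some a :=
    ⟨_, List.getElem?_eq_getElem (by omega)⟩
  obtain ⟨b, hb⟩ : ∃ b, w[m-1]? = some b :=
    ⟨_, List.getElem?_eq_getElem (by omega)⟩
  -- description of the first 3m+2 letters
  have base : ∀ p, p ≤ 3*m+1 →
      w[p]? = some (if p = m-1 ∨ p = 2*m ∨ p = 3*m then b else a) := by
    intro p hp
    by_cases h1 : p + 2 ≤ m
    · have h := hS2 p (by omega)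
      have e : p + (m+1) = m + (p+1) := by ring
      rw [e] at h
      rw [h, hE (p+1) (by omega), ha, if_neg (by omega)]
    · by_cases h2 : p = m-1
      · rw [h2, hb, if_pos (Or.inl rfl)]
      · by_cases h3 : p ≤ 2*m-1
        · have h := hE (p - m) (by omega)
          have e : m + (p - m) = p := by omega
          rw [e] at h
          rw [h, ha, if_neg (by omega)]
        · by_cases h4 : p = 2*m
          · have h := hS2 (m-1) (by omega)
            have e : m - 1 + (m+1) = 2*m := by omega
            rw [e] at h
            rw [h4, ← h, hb, if_pos (by omega)]
          · by_cases h5 : p + 1 ≤ 3*m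
            · have h := hS2 (p - (m+1)) (by omega)
              have e : p - (m+1) + (m+1) = p := by omega
              rw [e] at h
              have h' := hE (p - (m+1) - m) (by omega)
              have e2 : m + (p - (m+1) - m) = p - (m+1) := by omega
              rw [e2] at h'
              rw [← h, h', ha, if_neg (by omega)]
            · by_cases h6 : p = 3*m
              · have h := hQ (m-1) (by omega)
                have e : m - 1 + (2*m+1) = 3*m := by omega
                rw [e] at h
                rw [h6, ← h, hb, if_pos (by omega)]
              · have h7 : p = 3*m+1 := by omega
                have h := hQ m (by omega)
                have e : m + (2*m+1) = 3*m+1 := by omega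
                rw [e] at h
                rw [h7, ← h, ha, if_neg (by omega)]
  -- full description of w
  have hw_all : ∀ p, p < 7*m+3 →
      w[p]? = some (if p = m-1 ∨ p = 2*m ∨ p = 3*m ∨ p = 4*m+1 ∨ p = 5*m+2 ∨ p = 6*m+2
        then b else a) := by
    intro p hp
    by_cases h : p ≤ 3*m+1
    · rw [base p h]
      by_cases hc : p = m-1 ∨ p = 2*m ∨ p = 3*m
      · rw [if_pos hc, if_pos (by omega)]
      · rw [if_neg hc, if_neg (by omega)]
    · by_cases h' : p ≤ 6*m+3
      · have h1 := hP (p - (3*m+2)) (by omega)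
        have e : p - (3*m+2) + (3*m+2) = p := by omega
        rw [e] at h1
        rw [← h1, base _ (by omega)]
        by_cases hc : p = 4*m+1 ∨ p = 5*m+2 ∨ p = 6*m+2
        · rw [if_pos (by omega), if_pos (by omega)]
        · rw [if_neg (by omega), if_neg (by omega)]
      · have h1 := hP (p - (3*m+2)) (by omega)
        have h2 := hP (p - (6*m+4)) (by omega)
        have e1 : p - (3*m+2) + (3*m+2) = p := by omega
        have e2 : p - (6*m+4) + (3*m+2) = p - (3*m+2) := by omega
        rw [e1] at h1
        rw [e2] at h2
        rw [← h1, ← h2, base _ (by omega), if_neg (by omega), if_neg (by omega)]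
  -- the two letters are distinct
  have hne : a ≠ b := by
    intro hab
    subst hab
    have hrep : w = List.replicate (7*m+3) a := by
      apply List.ext_getElem?
      intro n
      by_cases hn : n < 7*m+3
      · rw [hw_all n hn, List.getElem?_replicate, if_pos hn, ite_self]
      · rw [List.getElem?_eq_none (by omega), List.getElem?_eq_none (by simp; omega)]
    obtain ⟨x, y, hx, hy, hxl, hyl, hxo, hyo⟩ := hfs 1 le_rfl hm
    obtain ⟨hocc, hlast⟩ := hxo
    have hxx : x ++ x = List.replicate (4*m+2) a := by
      have hsub : ∀ c ∈ x ++ x, c = a := by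
        intro c hc
        obtain ⟨u, v, hwu, _⟩ := hocc
        have hcw : c ∈ w := by
          rw [hwu]; simp only [List.mem_append] at hc ⊢; tauto
        rw [hrep] at hcw
        exact List.eq_of_mem_replicate hcw
      have := List.eq_replicate_of_mem hsub
      rwa [hxl] at this
    have hocc2 : OccursAt (x ++ x) w 2 := by
      refine ⟨[a], List.replicate (3*m) a, ?_, rfl⟩
      rw [hrep, hxx]
      rw [show (7*m+3) = 1 + (4*m+2) + 3*m by ring, List.replicate_add, List.replicate_add]
      simp [List.append_assoc]
    have := hlast 2 hocc2
    omega
  refine ⟨a, b, hne, ?_⟩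
  apply List.ext_getElem?
  intro n
  rw [wm_getElem? a b m hm n]
  by_cases hn : n < 7*m+3
  · rw [if_pos hn, hw_all n hn]
  · rw [if_neg hn, List.getElem?_eq_none (by omega)]
end

section
/- Let m ≥ 1 be odd and w_m = (a^{m-1} b a a^{m-1} b a^{m-1} b a)^2 a^{m-1}. Then the total number of distinct squares occurring in w_m equals (9m + 1)/2. -/
variable {α : Type*}

section Aux

def pat (m i : ℕ) : Prop :=
  i = m-1 ∨ i = 2*m ∨ i = 3*m ∨ i = 4*m+1 ∨ i = 5*m+2 ∨ i = 6*m+2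

instance (m i : ℕ) : Decidable (pat m i) := by unfold pat; infer_instance

def seg (a b : α) (m s L : ℕ) : List α :=
  (List.range L).map fun i => if pat m (s+i) then b else a

@[simp] lemma seg_length (a b : α) (m s L : ℕ) : (seg a b m s L).length = L := by simp [seg]

lemma seg_getElem (a b : α) (m s L i : ℕ) (h : i < L) :
    (seg a b m s L)[i]'(by simpa using h) = if pat m (s+i) then b else a := by simp [seg]

lemma getElem_mid (t z y : List α) (i : ℕ) (hi : i < z.length)
    (h2 : t.length + i < (t ++ z ++ y).length) :
    (t ++ z ++ y)[t.length + i]'h2 = z[i] := by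
  rw [List.getElem_append_left (by simp; omega), List.getElem_append_right (by omega)]
  congr 1
  omega

lemma ite_inj {a b : α} (hab : a ≠ b) {p q : Prop} [Decidable p] [Decidable q]
    (h : (if p then b else a) = (if q then b else a)) : p ↔ q := by
  by_cases hp : p <;> by_cases hq : q <;> simp [hp, hq] at h ⊢ <;> tauto

lemma seg_getD (a b : α) (m s L i : ℕ) (h : i < L) :
    (seg a b m s L).getD i a = if pat m (s+i) then b else a := by
  rw [List.getD_eq_getElem _ _ (by simpa using h), seg_getElem a b m s L i h]

lemma seg_eq_imp {a b : α} (hab : a ≠ b) {m s1 s2 L : ℕ}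
    (h : seg a b m s1 L = seg a b m s2 L) {i : ℕ} (hi : i < L) :
    pat m (s1+i) ↔ pat m (s2+i) := by
  have h2 := congrArg (fun l => l.getD i a) h
  rw [seg_getD a b m s1 L i hi, seg_getD a b m s2 L i hi] at h2
  exact ite_inj hab h2

lemma seg_add (a b : α) (m s L1 L2 : ℕ) :
    seg a b m s (L1 + L2) = seg a b m s L1 ++ seg a b m (s + L1) L2 := by
  simp only [seg, List.range_add, List.map_append, List.map_map]
  congr 1
  apply List.map_congr_left
  intro i _
  simp [Nat.add_assoc, Nat.add_comm, Nat.add_left_comm]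

lemma seg_congr (a b : α) (m s t L : ℕ) (h : ∀ i < L, (pat m (s+i) ↔ pat m (t+i))) :
    seg a b m s L = seg a b m t L := by
  apply List.ext_getElem (by simp)
  intro i h1 h2
  simp only [seg_length] at h1
  rw [seg_getElem a b m s L i h1, seg_getElem a b m t L i h1]
  by_cases hp : pat m (s+i)
  · rw [if_pos hp, if_pos ((h i h1).mp hp)]
  · rw [if_neg hp, if_neg (fun hq => hp ((h i h1).mpr hq))]

lemma seg_rep (a b : α) (m s L : ℕ) (h : ∀ i < L, ¬ pat m (s+i)) :
    seg a b m s L = List.replicate L a := by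
  apply List.eq_replicate_iff.mpr
  refine ⟨by simp, ?_⟩
  intro x hx
  simp only [seg, List.mem_map, List.mem_range] at hx
  obtain ⟨i, hi, rfl⟩ := hx
  rw [if_neg (h i hi)]

lemma seg_two (a b : α) (m s : ℕ) (h1 : pat m s) (h2 : ¬ pat m (s+1)) :
    seg a b m s 2 = [b, a] := by
  simp [seg, List.range_succ, h1, h2, show (2:ℕ) = 1+1 from rfl]

lemma seg_one (a b : α) (m s : ℕ) (h1 : pat m s) : seg a b m s 1 = [b] := by
  simp [seg, List.range_succ, h1]

lemma bigU_eq_seg (a b : α) (m t : ℕ) (hm : 1 ≤ m) (ht : t = 0 ∨ t = 3*m+2) :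
    bigU a b m = seg a b m t (3*m+2) := by
  have h : 3*m+2 = (m-1) + (2 + ((m-1) + (1 + ((m-1) + 2)))) := by omega
  rw [h, seg_add a b m t (m-1) _, seg_add a b m _ 2 _, seg_add a b m _ (m-1) _,
      seg_add a b m _ 1 _, seg_add a b m _ (m-1) 2]
  unfold bigU
  rw [seg_rep a b m t (m-1) (by intro i hi; simp only [pat]; omega),
      seg_two a b m _ (by simp only [pat]; omega) (by simp only [pat]; omega),
      seg_rep a b m _ (m-1) (by intro i hi; simp only [pat]; omega),
      seg_one a b m _ (by simp only [pat]; omega),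
      seg_rep a b m _ (m-1) (by intro i hi; simp only [pat]; omega),
      seg_two a b m _ (by simp only [pat]; omega) (by simp only [pat]; omega)]
  simp [List.append_assoc]

lemma wm_eq (a b : α) (m : ℕ) (hm : 1 ≤ m) :
    wm a b m = seg a b m 0 (7*m+3) := by
  have h : 7*m+3 = (3*m+2) + ((3*m+2) + (m-1)) := by omega
  rw [h, seg_add a b m 0 (3*m+2) ((3*m+2)+(m-1)), seg_add a b m (0+(3*m+2)) (3*m+2) (m-1)]
  unfold wm
  rw [← bigU_eq_seg a b m 0 hm (Or.inl rfl),
      ← bigU_eq_seg a b m (0 + (3*m+2)) hm (Or.inr (by omega)),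
      seg_rep a b m _ (m-1) (by intro i hi; simp only [pat]; omega)]
  simp [List.append_assoc]

lemma seg_mem_squareSet (a b : α) (m s L : ℕ) (hm : 1 ≤ m) (hL : 1 ≤ L)
    (hle : s + 2*L ≤ 7*m+3) (hp : ∀ i < L, (pat m (s+i) ↔ pat m (s+L+i))) :
    seg a b m s (2*L) ∈ squareSet (wm a b m) := by
  refine ⟨seg a b m s L, ?_, ?_, ?_⟩
  · intro h
    have := congrArg List.length h
    simp only [seg_length, List.length_nil] at this
    omega
  · rw [show 2*L = L+L by omega, seg_add]
    congr 1
    exact seg_congr a b m (s+L) s L (fun i hi => (hp i hi).symm)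
  · rw [wm_eq a b m hm]
    refine ⟨seg a b m 0 s, seg a b m (s + 2*L) (7*m+3 - (s+2*L)), ?_⟩
    rw [show 7*m+3 = s + (2*L + (7*m+3 - (s+2*L))) by omega,
        seg_add a b m 0 s _, seg_add a b m _ (2*L) _]
    simp [List.append_assoc]
    congr 1
    omega

lemma square_decomp (a b : α) (hab : a ≠ b) (m : ℕ) (u t y : List α) (hu : u ≠ [])
    (h : t ++ (u ++ u) ++ y = seg a b m 0 (7*m+3)) :
    ∃ s L, 1 ≤ L ∧ s + 2*L ≤ 7*m+3 ∧ (∀ i < L, (pat m (s+i) ↔ pat m (s+L+i))) ∧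
      u ++ u = seg a b m s (2*L) := by
  have hLpos : 1 ≤ u.length := List.length_pos_iff.mpr hu
  have hlen : t.length + 2*u.length + y.length = 7*m+3 := by
    have := congrArg List.length h
    simp at this
    omega
  have huu : ∀ i, (hi : i < 2*u.length) → (u++u)[i]'(by simp; omega) =
      if pat m (t.length+i) then b else a := by
    intro i hi
    have h1 := getElem_mid t (u++u) y i (by simp; omega)
      (by rw [h]; simp; omega)
    rw [← h1, List.getElem_of_eq h, seg_getElem a b m 0 (7*m+3) (t.length+i) (by omega),
      Nat.zero_add]
  have hu1 : u = seg a b m t.length u.length := by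
    apply List.ext_getElem (by simp)
    intro i h1 h2
    rw [seg_getElem a b m t.length u.length i (by simpa using h2)]
    have e1 := huu i (by omega)
    rwa [List.getElem_append_left (by omega)] at e1
  have hu2 : u = seg a b m (t.length + u.length) u.length := by
    apply List.ext_getElem (by simp)
    intro i h1 h2
    rw [seg_getElem a b m (t.length + u.length) u.length i (by simpa using h2)]
    have e1 := huu (u.length + i) (by omega)
    rw [List.getElem_append_right (by omega)] at e1
    rw [show t.length + (u.length + i) = t.length + u.length + i by omega] at e1
    rw [← e1]
    congr 1
    omega
  refine ⟨t.length, u.length, hLpos, by omega, ?_, ?_⟩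
  · intro i hi
    exact seg_eq_imp hab (hu1 ▸ hu2) hi
  · rw [show 2*u.length = u.length + u.length by omega, seg_add]
    rw [← hu1, ← hu2]

set_option maxHeartbeats 1000000 in
lemma classify (a b : α) (m s L : ℕ) (hm : 1 ≤ m) (hmo : Odd m) (hL : 1 ≤ L)
    (hle : s + 2*L ≤ 7*m+3) (key : ∀ i < L, (pat m (s+i) ↔ pat m (s+L+i))) :
    (∃ L' ∈ Finset.Icc 1 ((m-1)/2), seg a b m s (2*L) = seg a b m m (2*L')) ∨
    (∃ s' ∈ Finset.Icc (m+1) (2*m), seg a b m s (2*L) = seg a b m s' (2*m)) ∨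
    (∃ s' ∈ Finset.Icc (3*m) (4*m), seg a b m s (2*L) = seg a b m s' (2*(m+1))) ∨
    (∃ s' ∈ Finset.Icc 0 (m-1), seg a b m s (2*L) = seg a b m s' (2*(2*m+1))) ∨
    (∃ s' ∈ Finset.Icc 0 (m-1), seg a b m s (2*L) = seg a b m s' (2*(3*m+2))) := by
  obtain ⟨k, hk⟩ := hmo
  have key' : ∀ j, s ≤ j → j + L < s + 2*L → (pat m j ↔ pat m (j + L)) := by
    intro j h1 h2
    have h3 := key (j - s) (by omega)
    have e1 : s + (j - s) = j := by omega
    have e2 : s + L + (j - s) = j + L := by omega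
    rwa [e1, e2] at h3
  by_cases hsmall : 2*L ≤ m
  · -- all-a square
    have hnp : ∀ i < 2*L, ¬ pat m (s+i) := by
      intro i hi hp
      rcases Nat.lt_or_ge i L with h | h
      · have h2 := (key i h).mp hp
        simp only [pat] at hp h2
        omega
      · have h2' := key (i - L) (by omega)
        rw [show s + L + (i - L) = s + i by omega] at h2'
        have h2 := h2'.mpr hp
        simp only [pat] at hp h2
        omega
    left
    refine ⟨L, by simp only [Finset.mem_Icc]; omega, ?_⟩
    apply seg_congr
    intro i hi
    have h1 := hnp i hi
    simp only [pat] at h1 ⊢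
    omega
  · -- there is a b in the window
    obtain ⟨j, hj, hjs, hjlt⟩ : ∃ j, pat m j ∧ s ≤ j ∧ j < s + 2*L := by
      have hex : (s ≤ m-1 ∧ m-1 < s+2*L) ∨ (s ≤ 2*m ∧ 2*m < s+2*L) ∨
          (s ≤ 3*m ∧ 3*m < s+2*L) ∨ (s ≤ 4*m+1 ∧ 4*m+1 < s+2*L) ∨
          (s ≤ 5*m+2 ∧ 5*m+2 < s+2*L) ∨ (s ≤ 6*m+2 ∧ 6*m+2 < s+2*L) := by omega
      rcases hex with h|h|h|h|h|h
      · exact ⟨m-1, Or.inl rfl, h.1, h.2⟩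
      · exact ⟨2*m, Or.inr (Or.inl rfl), h.1, h.2⟩
      · exact ⟨3*m, Or.inr (Or.inr (Or.inl rfl)), h.1, h.2⟩
      · exact ⟨4*m+1, Or.inr (Or.inr (Or.inr (Or.inl rfl))), h.1, h.2⟩
      · exact ⟨5*m+2, Or.inr (Or.inr (Or.inr (Or.inr (Or.inl rfl)))), h.1, h.2⟩
      · exact ⟨6*m+2, Or.inr (Or.inr (Or.inr (Or.inr (Or.inr rfl)))), h.1, h.2⟩
    obtain ⟨q, hq1, hq2, hqs, hql⟩ :
        ∃ q, pat m q ∧ pat m (q + L) ∧ s ≤ q ∧ q + L < s + 2*L := by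
      rcases Nat.lt_or_ge j (s + L) with h | h
      · exact ⟨j, hj, (key' j hjs (by omega)).mp hj, hjs, by omega⟩
      · refine ⟨j - L, ?_, ?_, by omega, by omega⟩
        · have h3 := key' (j - L) (by omega) (by omega)
          rw [show j - L + L = j by omega] at h3
          exact h3.mpr hj
        · rw [show j - L + L = j by omega]
          exact hj
    have hq1' := hq1; have hq2' := hq2
    simp only [pat] at hq1' hq2'
    have hcase : (L = m ∧ q = 2*m) ∨ (L = m ∧ q = 5*m+2) ∨ (L = m+1 ∧ q = m-1) ∨
        (L = m+1 ∧ q = 3*m) ∨ (L = m+1 ∧ q = 4*m+1) ∨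
        (L = 2*m+1 ∧ (q = m-1 ∨ q = 2*m ∨ q = 4*m+1)) ∨ (L = 2*m+2 ∧ q = 3*m) ∨
        L = 3*m+2 := by
      clear key key' hq1 hq2 hjlt hjs hj
      rcases hq1' with rfl|rfl|rfl|rfl|rfl|rfl <;> omega
    rcases hcase with ⟨hLe, hqe⟩|⟨hLe, hqe⟩|⟨hLe, hqe⟩|⟨hLe, hqe⟩|⟨hLe, hqe⟩|⟨hLe, hqe⟩|⟨hLe, hqe⟩|hLe
    · -- L = m, q = 2m : s ∈ [m+1, 2m], s' = s
      subst hqe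
      rw [hLe]
      right; left
      exact ⟨s, by simp only [Finset.mem_Icc]; omega, rfl⟩
    · -- L = m, q = 5m+2 : s' = s - (3m+2)
      subst hqe
      rw [hLe]
      right; left
      refine ⟨s - (3*m+2), by simp only [Finset.mem_Icc]; omega, ?_⟩
      apply seg_congr
      intro i hi
      simp only [pat]
      omega
    · -- L = m+1, q = m-1
      subst hqe
      rw [hLe]
      have hs : s + 2 ≤ m := by
        by_contra hs
        have h3 := key' (2*m-1) (by omega) (by omega)
        have h4 : pat m (2*m-1) := h3.mpr (by simp only [pat]; omega)
        simp only [pat] at h4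
        omega
      right; right; left
      refine ⟨3*m+2+s, by simp only [Finset.mem_Icc]; omega, ?_⟩
      apply seg_congr
      intro i hi
      simp only [pat]
      omega
    · -- L = m+1, q = 3m
      subst hqe
      rw [hLe]
      have hs : 2*m + 1 ≤ s := by
        by_contra hs
        have h3 := key' (2*m) (by omega) (by omega)
        have h4 : pat m (2*m + L) := h3.mp (by simp [pat])
        simp only [pat] at h4
        omega
      right; right; left
      rcases Nat.lt_or_ge s (3*m) with h | h
      · refine ⟨s + m + 1, by simp only [Finset.mem_Icc]; omega, ?_⟩
        apply seg_congr
        intro i hi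
        simp only [pat]
        omega
      · refine ⟨s, by simp only [Finset.mem_Icc]; omega, rfl⟩
    · -- L = m+1, q = 4m+1
      subst hqe
      rw [hLe]
      have hs : s ≤ 4*m := by
        by_contra hs
        have h3 := key' (5*m+1) (by omega) (by omega)
        have h4 : pat m (5*m+1) := h3.mpr (by simp only [pat]; omega)
        simp only [pat] at h4
        omega
      right; right; left
      exact ⟨s, by simp only [Finset.mem_Icc]; omega, rfl⟩
    · -- L = 2m+1
      rw [hLe]
      have hs : s ≤ m - 1 := by
        rcases hqe with rfl | rfl | rfl
        · omega
        · by_contra hs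
          have h3 := key' (3*m) (by omega) (by omega)
          have h4 : pat m (3*m + L) := h3.mp (by simp [pat])
          simp only [pat] at h4
          omega
        · exfalso
          have h3 := key' (3*m+1) (by omega) (by omega)
          have h4 : pat m (3*m+1) := h3.mpr (by simp only [pat]; omega)
          simp only [pat] at h4
          omega
      right; right; right; left
      exact ⟨s, by simp only [Finset.mem_Icc]; omega, rfl⟩
    · -- L = 2m+2 : impossible
      exfalso
      subst hqe
      rcases Nat.lt_or_ge s (2*m) with h | h
      · have h3 := key' (2*m-1) (by omega) (by omega)
        have h4 : pat m (2*m-1) := h3.mpr (by simp only [pat]; omega)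
        simp only [pat] at h4
        omega
      · have h3 := key' (4*m+1) (by omega) (by omega)
        have h4 : pat m (4*m+1 + L) := h3.mp (by simp [pat])
        simp only [pat] at h4
        omega
    · -- L = 3m+2
      rw [hLe]
      right; right; right; right
      exact ⟨s, by simp only [Finset.mem_Icc]; omega, rfl⟩

end Aux

set_option maxHeartbeats 1000000 in
/-- For odd m ≥ 1, wₘ contains exactly (9m+1)/2 distinct squares. -/
theorem stmt10 {α : Type*} (a b : α) (hab : a ≠ b) (m : ℕ) (hm : 1 ≤ m) (hmo : Odd m) :
    (squareSet (wm a b m)).ncard = (9 * m + 1) / 2 := by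
  classical
  obtain ⟨k, hk⟩ := hmo
  set F1 := (Finset.Icc 1 ((m-1)/2)).image (fun L => seg a b m m (2*L)) with hF1
  set F2 := (Finset.Icc (m+1) (2*m)).image (fun s => seg a b m s (2*m)) with hF2
  set F3 := (Finset.Icc (3*m) (4*m)).image (fun s => seg a b m s (2*(m+1))) with hF3
  set F4 := (Finset.Icc 0 (m-1)).image (fun s => seg a b m s (2*(2*m+1))) with hF4
  set F5 := (Finset.Icc 0 (m-1)).image (fun s => seg a b m s (2*(3*m+2))) with hF5
  have hset : squareSet (wm a b m) = ↑(F1 ∪ F2 ∪ F3 ∪ F4 ∪ F5) := by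
    ext x
    simp only [Finset.coe_union, Set.mem_union, Finset.mem_coe]
    constructor
    · rintro ⟨u, hu, rfl, t, y, ht⟩
      rw [wm_eq a b m hm] at ht
      obtain ⟨s, L, hL, hle, key, huu⟩ := square_decomp a b hab m u t y hu ht
      rw [huu]
      rcases classify a b m s L hm ⟨k, hk⟩ hL hle key with
        ⟨L', hL', he⟩|⟨s', hs', he⟩|⟨s', hs', he⟩|⟨s', hs', he⟩|⟨s', hs', he⟩
      · exact Or.inl (Or.inl (Or.inl (Or.inl (Finset.mem_image.mpr ⟨L', hL', he.symm⟩))))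
      · exact Or.inl (Or.inl (Or.inl (Or.inr (Finset.mem_image.mpr ⟨s', hs', he.symm⟩))))
      · exact Or.inl (Or.inl (Or.inr (Finset.mem_image.mpr ⟨s', hs', he.symm⟩)))
      · exact Or.inl (Or.inr (Finset.mem_image.mpr ⟨s', hs', he.symm⟩))
      · exact Or.inr (Finset.mem_image.mpr ⟨s', hs', he.symm⟩)
    · intro hx
      rcases hx with ((((hx|hx)|hx)|hx)|hx) <;>
        obtain ⟨s', hs', rfl⟩ := Finset.mem_image.mp hx <;>
        simp only [Finset.mem_Icc] at hs'
      · exact seg_mem_squareSet a b m m s' hm (by omega) (by omega)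
          (by intro i hi; simp only [pat]; omega)
      · exact seg_mem_squareSet a b m s' m hm (by omega) (by omega)
          (by intro i hi; simp only [pat]; omega)
      · exact seg_mem_squareSet a b m s' (m+1) hm (by omega) (by omega)
          (by intro i hi; simp only [pat]; omega)
      · exact seg_mem_squareSet a b m s' (2*m+1) hm (by omega) (by omega)
          (by intro i hi; simp only [pat]; omega)
      · exact seg_mem_squareSet a b m s' (3*m+2) hm (by omega) (by omega)
          (by intro i hi; simp only [pat]; omega)
  rw [hset, Set.ncard_coe_finset]
  have hmem1 : ∀ x ∈ F1, ∃ L', 1 ≤ L' ∧ 2*L' ≤ m-1 ∧ x.length = 2*L' := by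
    intro x hx
    obtain ⟨L', hL', rfl⟩ := Finset.mem_image.mp hx
    simp only [Finset.mem_Icc] at hL'
    exact ⟨L', hL'.1, by omega, by simp⟩
  have hmem2 : ∀ x ∈ F2, x.length = 2*m := by
    intro x hx; obtain ⟨s', _, rfl⟩ := Finset.mem_image.mp hx; simp
  have hmem3 : ∀ x ∈ F3, x.length = 2*(m+1) := by
    intro x hx; obtain ⟨s', _, rfl⟩ := Finset.mem_image.mp hx; simp
  have hmem4 : ∀ x ∈ F4, x.length = 2*(2*m+1) := by
    intro x hx; obtain ⟨s', _, rfl⟩ := Finset.mem_image.mp hx; simp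
  have hmem5 : ∀ x ∈ F5, x.length = 2*(3*m+2) := by
    intro x hx; obtain ⟨s', _, rfl⟩ := Finset.mem_image.mp hx; simp
  have d12 : Disjoint F1 F2 := Finset.disjoint_left.mpr (fun x h1 h2 => by
    obtain ⟨L', _, _, he⟩ := hmem1 x h1; have := hmem2 x h2; omega)
  have d13 : Disjoint F1 F3 := Finset.disjoint_left.mpr (fun x h1 h2 => by
    obtain ⟨L', _, _, he⟩ := hmem1 x h1; have := hmem3 x h2; omega)
  have d14 : Disjoint F1 F4 := Finset.disjoint_left.mpr (fun x h1 h2 => by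
    obtain ⟨L', _, _, he⟩ := hmem1 x h1; have := hmem4 x h2; omega)
  have d15 : Disjoint F1 F5 := Finset.disjoint_left.mpr (fun x h1 h2 => by
    obtain ⟨L', _, _, he⟩ := hmem1 x h1; have := hmem5 x h2; omega)
  have d23 : Disjoint F2 F3 := Finset.disjoint_left.mpr (fun x h1 h2 => by
    have := hmem2 x h1; have := hmem3 x h2; omega)
  have d24 : Disjoint F2 F4 := Finset.disjoint_left.mpr (fun x h1 h2 => by
    have := hmem2 x h1; have := hmem4 x h2; omega)
  have d25 : Disjoint F2 F5 := Finset.disjoint_left.mpr (fun x h1 h2 => by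
    have := hmem2 x h1; have := hmem5 x h2; omega)
  have d34 : Disjoint F3 F4 := Finset.disjoint_left.mpr (fun x h1 h2 => by
    have := hmem3 x h1; have := hmem4 x h2; omega)
  have d35 : Disjoint F3 F5 := Finset.disjoint_left.mpr (fun x h1 h2 => by
    have := hmem3 x h1; have := hmem5 x h2; omega)
  have d45 : Disjoint F4 F5 := Finset.disjoint_left.mpr (fun x h1 h2 => by
    have := hmem4 x h1; have := hmem5 x h2; omega)
  rw [Finset.card_union_of_disjoint (by
        simp only [Finset.disjoint_union_left]; exact ⟨⟨⟨d15, d25⟩, d35⟩, d45⟩),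
      Finset.card_union_of_disjoint (by
        simp only [Finset.disjoint_union_left]; exact ⟨⟨d14, d24⟩, d34⟩),
      Finset.card_union_of_disjoint (by
        simp only [Finset.disjoint_union_left]; exact ⟨d13, d23⟩),
      Finset.card_union_of_disjoint d12]
  have c1 : F1.card = (m-1)/2 := by
    rw [hF1, Finset.card_image_of_injOn, Nat.card_Icc]
    · omega
    · intro s1 h1 s2 h2 he
      have := congrArg List.length he
      simp only [seg_length] at this
      omega
  have c2 : F2.card = m := by
    rw [hF2, Finset.card_image_of_injOn, Nat.card_Icc]
    · omega
    · intro s1 h1 s2 h2 he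
      simp only [Finset.coe_Icc, Set.mem_Icc] at h1 h2
      have e1 := seg_eq_imp hab he (i := 2*m - s1) (by omega)
      simp only [pat] at e1
      omega
  have c3 : F3.card = m+1 := by
    rw [hF3, Finset.card_image_of_injOn, Nat.card_Icc]
    · omega
    · intro s1 h1 s2 h2 he
      simp only [Finset.coe_Icc, Set.mem_Icc] at h1 h2
      have e1 := seg_eq_imp hab he (i := 4*m+1 - s1) (by omega)
      simp only [pat] at e1
      omega
  have c4 : F4.card = m := by
    rw [hF4, Finset.card_image_of_injOn, Nat.card_Icc]
    · omega
    · intro s1 h1 s2 h2 he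
      simp only [Finset.coe_Icc, Set.mem_Icc] at h1 h2
      have e1 := seg_eq_imp hab he (i := 2*m - s1) (by omega)
      simp only [pat] at e1
      omega
  have c5 : F5.card = m := by
    rw [hF5, Finset.card_image_of_injOn, Nat.card_Icc]
    · omega
    · intro s1 h1 s2 h2 he
      simp only [Finset.coe_Icc, Set.mem_Icc] at h1 h2
      have e1 := seg_eq_imp hab he (i := 2*m - s1) (by omega)
      simp only [pat] at e1
      omega
  rw [c1, c2, c3, c4, c5]
  omega
end

section
/- For every real ε > 0 there exists a word w (over a two-letter alphabet) such that the number of distinct squares occurring in w is greater than (5/6 − ε)·|w|. -/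
variable {α : Type*}

/- ====================  auxiliary development  ==================== -/

def ar (n : ℕ) : List (Fin 2) := List.replicate n 0

lemma ar_ar2 (m n : ℕ) : ar m ++ ar n = ar (m+n) := by
  rw [ar, ar, ar, ← List.replicate_add]

lemma ar_ar (m n : ℕ) (l : List (Fin 2)) : ar m ++ (ar n ++ l) = ar (m+n) ++ l := by
  rw [← List.append_assoc, ar_ar2]

def Zw (t : ℕ) : List (Fin 2) :=
  ar t ++ [1] ++ ar (t+1) ++ [1] ++ ar t ++ [1] ++ ar (t+1) ++ [1] ++ ar (t+1) ++ [1] ++ ar t ++ [1]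

def Pw : ℕ → List (Fin 2)
  | 0 => []
  | (j+1) => Pw j ++ Zw j

def Yw (j : ℕ) : List (Fin 2) := Pw j ++ ar j

def r1 (p q : ℕ) : List (Fin 2) := ar (p+1) ++ [1] ++ ar q
def r2a (p q : ℕ) : List (Fin 2) := ar p ++ [1] ++ ar (p+q+1) ++ [1] ++ ar q
def r2b (p q : ℕ) : List (Fin 2) := ar p ++ [1] ++ ar (p+q+1) ++ [1] ++ ar (q+2)
def r3a (p q : ℕ) : List (Fin 2) := ar p ++ [1] ++ ar (p+q) ++ [1] ++ ar (p+q+1) ++ [1] ++ ar (q+1)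
def r3b (p q : ℕ) : List (Fin 2) := ar p ++ [1] ++ ar (p+q+1) ++ [1] ++ ar (p+q) ++ [1] ++ ar (q+1)

def root : ℕ → ℕ → ℕ → List (Fin 2)
  | 0, p, q => r1 p q
  | 1, p, q => r2a p q
  | 2, p, q => r2b p q
  | 3, p, q => r3a p q
  | _, p, q => r3b p q

/- occurrence identities -/

lemma O1 (p q : ℕ) : Zw (p+q) =
    (ar (p+q) ++ [1] ++ ar (p+q+1) ++ [1] ++ ar (p+q) ++ [1] ++ ar q) ++ (r1 p q ++ r1 p q) ++ (ar p ++ [1]) := by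
  simp only [Zw, r1, List.append_assoc, List.cons_append, List.nil_append, ar_ar, ar_ar2]
  ring_nf

lemma O2a (p q : ℕ) : Zw (p+q) =
    ar q ++ (r2a p q ++ r2a p q) ++ (ar (p+1) ++ [1] ++ ar (p+q) ++ [1]) := by
  simp only [Zw, r2a, List.append_assoc, List.cons_append, List.nil_append, ar_ar, ar_ar2]
  ring_nf

lemma O2b (p q : ℕ) : Zw (p+q) ++ Zw (p+q+1) =
    (ar (p+q) ++ [1] ++ ar (p+q+1) ++ [1] ++ ar (p+q) ++ [1] ++ ar (p+q+1) ++ [1] ++ ar (p+q+1) ++ [1] ++ ar q)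
    ++ (r2b p q ++ r2b p q)
    ++ (ar p ++ [1] ++ ar (p+q+2) ++ [1] ++ ar (p+q+1) ++ [1]) := by
  simp only [Zw, r2b, List.append_assoc, List.cons_append, List.nil_append, ar_ar, ar_ar2]
  ring_nf

lemma O3a (p q : ℕ) : Zw (p+q) ++ ar (p+q+1) ++ [1] ++ ar (q+1) =
    (ar (p+q) ++ [1] ++ ar (q+1)) ++ (r3a p q ++ r3a p q) ++ [] := by
  simp only [Zw, r3a, List.append_assoc, List.cons_append, List.nil_append, List.append_nil, ar_ar, ar_ar2]
  ring_nf

lemma O3b (p q : ℕ) : Zw (p+q) ++ ar (p+q+1) =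
    ar q ++ (r3b p q ++ r3b p q) ++ ar p := by
  simp only [Zw, r3b, List.append_assoc, List.cons_append, List.nil_append, ar_ar, ar_ar2]
  ring_nf

lemma Zsplit (p q : ℕ) : Zw (p+q+1) =
    (ar (p+q+1) ++ [1] ++ ar (q+1)) ++
      (ar (p+1) ++ [1] ++ ar (p+q+1) ++ [1] ++ ar (p+q+2) ++ [1] ++ ar (p+q+2) ++ [1] ++ ar (p+q+1) ++ [1]) := by
  simp only [Zw, List.append_assoc, List.cons_append, List.nil_append, ar_ar, ar_ar2]
  ring_nf

/- infix lemmas -/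

lemma Psplit : ∀ j t, t < j → ∃ r, Pw j = Pw t ++ (Zw t ++ r) := by
  intro j
  induction j with
  | zero => omega
  | succ j ih =>
    intro t ht
    rcases Nat.lt_succ_iff_lt_or_eq.mp ht with h | rfl
    · obtain ⟨r, hr⟩ := ih t h
      exact ⟨r ++ Zw j, by simp [Pw, hr]⟩
    · exact ⟨[], by simp [Pw]⟩

lemma block1_infix {t j : ℕ} (h : t < j) : Zw t <:+: Yw j := by
  obtain ⟨r, hr⟩ := Psplit j t h
  exact ⟨Pw t, r ++ ar j, by simp [Yw, hr]⟩

lemma block2_infix {t j : ℕ} (h : t + 1 < j) : Zw t ++ Zw (t+1) <:+: Yw j := by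
  obtain ⟨r, hr⟩ := Psplit j (t+1) h
  have h2 : Pw (t+1) = Pw t ++ Zw t := rfl
  exact ⟨Pw t, r ++ ar j, by simp [Yw, hr, h2]⟩

lemma root_ne_nil (i p q : ℕ) : root i p q ≠ [] := by
  rcases i with _|_|_|_|i <;> simp [root, r1, r2a, r2b, r3a, r3b]

lemma sq_mem {i p q j : ℕ} (h : p + q + 2 ≤ j) :
    root i p q ++ root i p q ∈ squareSet (Yw j) := by
  refine ⟨root i p q, root_ne_nil i p q, rfl, ?_⟩
  rcases i with _|_|_|_|i
  · have h1 : r1 p q ++ r1 p q <:+: Zw (p+q) := ⟨_, _, (O1 p q).symm⟩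
    exact h1.trans (block1_infix (by omega))
  · have h1 : r2a p q ++ r2a p q <:+: Zw (p+q) := ⟨_, _, (O2a p q).symm⟩
    exact h1.trans (block1_infix (by omega))
  · have h1 : r2b p q ++ r2b p q <:+: Zw (p+q) ++ Zw (p+q+1) := ⟨_, _, (O2b p q).symm⟩
    exact h1.trans (block2_infix (by omega))
  · have h1 : r3a p q ++ r3a p q <:+: Zw (p+q) ++ ar (p+q+1) ++ [1] ++ ar (q+1) :=
      ⟨_, _, (O3a p q).symm⟩
    have h2 : Zw (p+q) ++ ar (p+q+1) ++ [1] ++ ar (q+1) <:+: Zw (p+q) ++ Zw (p+q+1) := by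
      refine ⟨[], ar (p+1) ++ [1] ++ ar (p+q+1) ++ [1] ++ ar (p+q+2) ++ [1] ++ ar (p+q+2) ++ [1] ++ ar (p+q+1) ++ [1], ?_⟩
      rw [Zsplit p q]
      simp [List.append_assoc]
    exact (h1.trans h2).trans (block2_infix (by omega))
  · have h1 : r3b p q ++ r3b p q <:+: Zw (p+q) ++ ar (p+q+1) := ⟨_, _, (O3b p q).symm⟩
    have h2 : Zw (p+q) ++ ar (p+q+1) <:+: Zw (p+q) ++ Zw (p+q+1) := by
      refine ⟨[], [1] ++ ar (p+q+2) ++ [1] ++ ar (p+q+1) ++ [1] ++ ar (p+q+2) ++ [1] ++ ar (p+q+2) ++ [1] ++ ar (p+q+1) ++ [1], ?_⟩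
      simp [Zw, List.append_assoc]
    exact (h1.trans h2).trans (block2_infix (by omega))

/- injectivity -/

lemma ar_inj {m n : ℕ} (h : ar m = ar n) : m = n := by
  have := congrArg List.length h
  simpa [ar] using this

lemma ar_one_inj : ∀ {m n : ℕ} {l l' : List (Fin 2)},
    ar m ++ [1] ++ l = ar n ++ [1] ++ l' → m = n ∧ l = l' := by
  intro m
  induction m with
  | zero =>
    intro n l l' h
    cases n with
    | zero => simpa [ar] using h
    | succ k =>
      exfalso
      simp [ar, List.replicate_succ] at h
  | succ m ih =>
    intro n l l' h
    cases n with
    | zero =>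
      exfalso
      simp [ar, List.replicate_succ] at h
    | succ k =>
      simp only [ar, List.replicate_succ, List.cons_append, List.cons.injEq] at h
      obtain ⟨-, h⟩ := h
      have := ih (n := k) (l := l) (l' := l') (by simpa [ar] using h)
      exact ⟨by omega, this.2⟩

@[simp] lemma count_ar (n : ℕ) : List.count (1 : Fin 2) (ar n) = 0 := by
  simp [ar, List.count_replicate]

lemma root_inj {i p q i' p' q' : ℕ} (hi : i < 5) (hi' : i' < 5)
    (h : root i p q = root i' p' q') : i = i' ∧ p = p' ∧ q = q' := by
  interval_cases i <;> interval_cases i' <;>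
    simp only [root] at h <;>
    first
    | · exfalso
        have hc := congrArg (List.count (1 : Fin 2)) h
        simp [r1, r2a, r2b, r3a, r3b, List.count_append] at hc
    | · simp only [r1, r2a, r2b, r3a, r3b, List.append_assoc] at h
        obtain ⟨e1, h⟩ := ar_one_inj (by simpa [List.append_assoc] using h)
        first
        | · have e2 := ar_inj h
            exact ⟨rfl, by omega, by omega⟩
        | · obtain ⟨e2, h⟩ := ar_one_inj (by simpa [List.append_assoc] using h)
            first
            | · have e3 := ar_inj h
                exact ⟨by omega, by omega, by omega⟩
            | · obtain ⟨e3, h⟩ := ar_one_inj (by simpa [List.append_assoc] using h)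
                have e4 := ar_inj h
                exact ⟨by omega, by omega, by omega⟩

/- counting -/

lemma squareSet_finite (w : List (Fin 2)) : (squareSet w).Finite := by
  apply Set.Finite.subset (List.finite_toSet w.sublists)
  rintro x ⟨u, -, -, hx⟩
  exact List.mem_sublists.2 hx.sublist

def SS (j : ℕ) : Finset ((_ : ℕ) × ℕ) := (Finset.range (j-1)).sigma (fun t => Finset.range (t+1))

def Dm (j : ℕ) : Finset (ℕ × (_ : ℕ) × ℕ) := Finset.range 5 ×ˢ SS j

noncomputable def G : ℕ × ((_ : ℕ) × ℕ) → List (Fin 2) :=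
  fun x => root x.1 x.2.2 (x.2.1 - x.2.2) ++ root x.1 x.2.2 (x.2.1 - x.2.2)

lemma G_injOn (j : ℕ) : Set.InjOn G (Dm j) := by
  rintro ⟨i, t, p⟩ hx ⟨i', t', p'⟩ hy hG
  have hx' : (i, (⟨t, p⟩ : (_ : ℕ) × ℕ)) ∈ Dm j := hx
  have hy' : (i', (⟨t', p'⟩ : (_ : ℕ) × ℕ)) ∈ Dm j := hy
  simp only [Dm, SS, Finset.mem_product, Finset.mem_sigma, Finset.mem_range] at hx' hy'
  obtain ⟨hi, ht, hp⟩ := hx'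
  obtain ⟨hi', ht', hp'⟩ := hy' 
  simp only [G] at hG
  have hlen : (root i p (t - p)).length = (root i' p' (t' - p')).length := by
    have := congrArg List.length hG
    simp at this
    omega
  have hroot : root i p (t - p) = root i' p' (t' - p') := (List.append_inj hG hlen).1
  obtain ⟨e1, e2, e3⟩ := root_inj hi hi' hroot
  have : t = t' := by omega
  subst this; subst e1; subst e2
  rfl

lemma gauss : ∀ n : ℕ, 2 * (∑ t ∈ Finset.range n, (t+1)) = n * (n+1) := by
  intro n
  induction n with
  | zero => simp
  | succ n ih =>
    rw [Finset.sum_range_succ, Nat.mul_add, ih]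
    ring

lemma Dm_card (j : ℕ) : 2 * (Dm j).card = 5 * ((j-1) * j) := by
  have h1 : (Dm j).card = 5 * (SS j).card := by
    simp [Dm, Finset.card_product]
  have h2 : (SS j).card = ∑ t ∈ Finset.range (j-1), (t+1) := by
    simp [SS, Finset.card_sigma]
  have h3 := gauss (j-1)
  rcases Nat.eq_zero_or_pos j with rfl | hj
  · simp [h1, h2]
  · have e : (j-1) + 1 = j := by omega
    rw [e] at h3
    rw [h1, h2]
    linarith

lemma card_le_ncard (j : ℕ) : (Dm j).card ≤ (squareSet (Yw j)).ncard := by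
  classical
  have hsub : ↑((Dm j).image G) ⊆ squareSet (Yw j) := by
    intro x hx
    simp only [Finset.coe_image, Set.mem_image, Finset.mem_coe] at hx
    obtain ⟨⟨i, t, p⟩, hmem, rfl⟩ := hx
    simp only [Dm, SS, Finset.mem_product, Finset.mem_sigma, Finset.mem_range] at hmem
    obtain ⟨hi, ht, hp⟩ := hmem
    simpa [G] using sq_mem (i := i) (p := p) (q := t - p) (j := j) (by omega)
  calc (Dm j).card = ((Dm j).image G).card := (Finset.card_image_of_injOn (G_injOn j)).symm
    _ = (↑((Dm j).image G) : Set (List (Fin 2))).ncard := (Set.ncard_coe_finset _).symm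
    _ ≤ (squareSet (Yw j)).ncard := Set.ncard_le_ncard hsub (squareSet_finite _)

/- lengths -/

lemma len_Z (t : ℕ) : (Zw t).length = 6*t+9 := by simp [Zw, ar]; omega

lemma len_P (j : ℕ) : (Pw j).length = 3*j*j + 6*j := by
  induction j with
  | zero => simp [Pw]
  | succ j ih => simp [Pw, len_Z, ih]; ring

lemma len_Y (j : ℕ) : (Yw j).length = 3*j*j + 7*j := by
  simp [Yw, len_P, ar]; ring

/- ====================  main theorem  ==================== -/

/-- There exist words whose distinct-square-density approaches 5/6. -/
theorem stmt14 : ∀ ε : ℝ, 0 < ε → ∃ w : List (Fin 2),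
    ((squareSet w).ncard : ℝ) > (5 / 6 - ε) * w.length := by
  intro ε hε
  set j : ℕ := ⌈(3:ℝ)/ε⌉₊ + 1 with hj
  refine ⟨Yw j, ?_⟩
  have hj1 : (1:ℝ) ≤ (j:ℝ) := by
    have : 1 ≤ j := by omega
    exact_mod_cast this
  have hεj : 3 ≤ ε * (j:ℝ) := by
    have h1 : (3:ℝ)/ε ≤ ⌈(3:ℝ)/ε⌉₊ := Nat.le_ceil _
    have h2 : ((⌈(3:ℝ)/ε⌉₊ : ℝ)) ≤ (j:ℝ) := by
      have : (⌈(3:ℝ)/ε⌉₊ : ℕ) ≤ j := by omega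
      exact_mod_cast this
    have h3 : (3:ℝ)/ε ≤ (j:ℝ) := le_trans h1 h2
    calc (3:ℝ) = ε * ((3:ℝ)/ε) := by field_simp
      _ ≤ ε * (j:ℝ) := by
          exact mul_le_mul_of_nonneg_left h3 (le_of_lt hε)
  have hcard := card_le_ncard j
  have hDm := Dm_card j
  -- convert to reals
  have hcardR : (5:ℝ) * ((j:ℝ) - 1) * (j:ℝ) / 2 ≤ ((squareSet (Yw j)).ncard : ℝ) := by
    have h1 : ((Dm j).card : ℝ) ≤ ((squareSet (Yw j)).ncard : ℝ) := by exact_mod_cast hcard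
    have h2 : 2 * ((Dm j).card : ℝ) = 5 * (((j:ℝ) - 1) * (j:ℝ)) := by
      have hj0 : 1 ≤ j := by omega
      have : ((j - 1 : ℕ) : ℝ) = (j:ℝ) - 1 := by
        push_cast [Nat.cast_sub hj0]
        ring
      exact_mod_cast calc (2 * ((Dm j).card :ℝ)) = ((2 * (Dm j).card : ℕ) : ℝ) := by push_cast; ring
        _ = ((5 * ((j-1) * j) : ℕ) : ℝ) := by rw [hDm]
        _ = 5 * (((j:ℝ) - 1) * (j:ℝ)) := by push_cast [Nat.cast_sub hj0]; ring
    linarith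
  rw [len_Y]
  have hlen : ((3*j*j + 7*j : ℕ) : ℝ) = 3*(j:ℝ)*(j:ℝ) + 7*(j:ℝ) := by push_cast; ring
  rw [hlen]
  have key : (5 / 6 - ε) * (3*(j:ℝ)*(j:ℝ) + 7*(j:ℝ)) < 5 * ((j:ℝ) - 1) * (j:ℝ) / 2 := by
    have h4 : (j:ℝ) * (ε * (j:ℝ)) ≥ 3 * (j:ℝ) := by
      nlinarith
    nlinarith
  linarith
end

section
/- Let i be an FS-double-square-position of word w with FS-double-square (u, U), i.e., two squares u^2 and U^2 with |u| < |U| both having their last occurrence beginning at position i. If w^2 is a square whose last occurrence in the word begins at position i+1, with root x, then |x| ∈ {|u|, |U|} or |x| ≥ 2|u|. -/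
variable {α : Type*}

namespace SqCore
variable {β : Type*}

def Per (f : ℕ → β) (A B π : ℕ) : Prop :=
  ∀ i, A ≤ i → i + π < B → f i = f (i + π)

lemma per_mono {f : ℕ → β} {A B A' B' π : ℕ} (h : Per f A B π) (hA : A ≤ A') (hB : B' ≤ B) :
    Per f A' B' π := fun i hi hiB => h i (le_trans hA hi) (lt_of_lt_of_le hiB hB)

lemma per_mul {f : ℕ → β} {A B π : ℕ} (h : Per f A B π) (hπ : 0 < π) :
    ∀ k i, A ≤ i → i + π * k < B → f i = f (i + π * k) := by
  intro k
  induction k with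
  | zero => intro i _ _; simp
  | succ n ih =>
    intro i hi hB
    have h1 : f i = f (i + π) := h i hi (by nlinarith)
    have h2 : f (i + π) = f (i + π + π * n) := ih (i + π) (by omega) (by nlinarith)
    rw [h1, h2]; congr 1; ring

lemma per_resid {f : ℕ → β} {A B π : ℕ} (h : Per f A B π) (hπ : 0 < π) :
    ∀ i j, A ≤ i → A ≤ j → i < B → j < B → i % π = j % π → f i = f j := by
  have key : ∀ i j, i ≤ j → A ≤ i → j < B → i % π = j % π → f i = f j := by
    intro i j hij hi hjB hmod
    obtain ⟨k, hk⟩ := (Nat.modEq_iff_dvd' hij).mp hmod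
    have hj : j = i + π * k := by omega
    rw [hj]; exact per_mul h hπ k i hi (by omega)
  intro i j hi hj hiB hjB hmod
  rcases le_total i j with hle | hle
  · exact key i j hle hi hjB hmod
  · exact (key j i hle hj hiB hmod.symm).symm

/-- Extension lemma: a period `g` dividing `E`, valid on a window of length `≥ E`
inside a region with period `E`, extends to the whole region. -/
lemma ext {f : ℕ → β} {C D E A B g : ℕ} (hg : 0 < g) (hE : 0 < E) (hgE : g ∣ E)
    (hCD : Per f C D E) (hAB : Per f A B g)
    (hCA : C ≤ A) (hAEB : A + E ≤ B) (hBD : B ≤ D) : Per f C D g := by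
  have reachDown : ∀ k i, i < A + E + k → A ≤ i → i < D →
      ∃ j, A ≤ j ∧ j < A + E ∧ f i = f j ∧ i % E = j % E := by
    intro k
    induction k with
    | zero =>
      intro i hik hAi hiD
      exact ⟨i, hAi, by omega, rfl, rfl⟩
    | succ n ih =>
      intro i hik hAi hiD
      rcases lt_or_ge i (A + E) with hlt | hge
      · exact ⟨i, hAi, hlt, rfl, rfl⟩
      · have h1 : f (i - E) = f i := by
          have := hCD (i - E) (by omega) (by omega)
          rwa [Nat.sub_add_cancel (by omega)] at this
        obtain ⟨j, hj1, hj2, hj3, hj4⟩ := ih (i - E) (by omega) (by omega) (by omega)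
        refine ⟨j, hj1, hj2, h1 ▸ hj3, ?_⟩
        rw [← hj4, Nat.mod_eq_sub_mod (by omega : E ≤ i)]
  have reachUp : ∀ k i, A ≤ i + k → C ≤ i → i < D →
      ∃ j, A ≤ j ∧ j < A + E ∧ f i = f j ∧ i % E = j % E := by
    intro k
    induction k with
    | zero =>
      intro i hik hCi hiD
      exact reachDown (i + 1) i (by omega) (by omega) hiD
    | succ n ih =>
      intro i hik hCi hiD
      rcases le_or_gt A i with hge | hlt
      · exact reachDown (i + 1) i (by omega) hge hiD
      · have h1 : f i = f (i + E) := hCD i hCi (by omega)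
        obtain ⟨j, hj1, hj2, hj3, hj4⟩ := ih (i + E) (by omega) (by omega) (by omega)
        refine ⟨j, hj1, hj2, h1 ▸ hj3, ?_⟩
        rw [← hj4, Nat.add_mod_right]
  intro i hCi hiB
  obtain ⟨j, hAj, hjE, hfj, hjm⟩ := reachUp A i (by omega) hCi (by omega)
  obtain ⟨j', hAj', hjE', hfj', hjm'⟩ := reachUp A (i + g) (by omega) (by omega) (by omega)
  have hgle : g ≤ E := Nat.le_of_dvd hE hgE
  have hmodeq : (j + g) % E = j' % E := by
    rw [Nat.add_mod, ← hjm, ← Nat.add_mod, ← hjm']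
  rcases le_or_gt j' (j + g) with hle | hlt
  · obtain ⟨k, hk⟩ := (Nat.modEq_iff_dvd' hle).mp hmodeq.symm
    have hkval : j + g - j' = 0 ∨ j + g - j' = E := by
      rcases Nat.lt_or_ge k 2 with hk2 | hk2
      · interval_cases k <;> omega
      · exfalso
        have h2 : E * 2 ≤ E * k := Nat.mul_le_mul_left E hk2
        omega
    rcases hkval with h0 | hEeq
    · have hjj : j' = j + g := by omega
      rw [hfj, hfj', hjj]
      exact hAB j hAj (by omega)
    · obtain ⟨t, ht⟩ := hgE
      rcases t with _ | s
      · exfalso; omega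
      have hgs : g * (s + 1) = g * s + g := by ring
      have hj'j : j = j' + g * s := by omega
      have hfstep : f j' = f (j' + g * s) := per_mul hAB hg s j' hAj' (by omega)
      rw [hfj, hfj', hj'j]
      exact hfstep.symm
  · exfalso
    obtain ⟨k, hk⟩ := (Nat.modEq_iff_dvd' (le_of_lt hlt)).mp hmodeq
    rcases Nat.eq_zero_or_pos k with h0 | h1
    · subst h0; simp at hk; omega
    · have h2 : E * 1 ≤ E * k := Nat.mul_le_mul_left E h1
      omega

/-- Sharp Fine–Wilf on an interval. -/
lemma fw {f : ℕ → β} : ∀ n a b A L, a + b ≤ n → 0 < a → 0 < b →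
    a + b ≤ L + Nat.gcd a b →
    Per f A (A + L) a → Per f A (A + L) b → Per f A (A + L) (Nat.gcd a b) := by
  intro n
  induction n using Nat.strong_induction_on with
  | _ n ih =>
    intro a b A L hn ha hb hL hpa hpb
    rcases lt_trichotomy a b with hab | hab | hab
    · have hg : Nat.gcd a (b - a) = Nat.gcd a b := by
        conv_rhs => rw [show b = (b - a) + a by omega]
        rw [Nat.gcd_add_self_right]
      have hba : 0 < b - a := by omega
      have hgdvd_a : Nat.gcd a b ∣ a := Nat.gcd_dvd_left a b
      have hgdvd_b : Nat.gcd a b ∣ b := Nat.gcd_dvd_right a b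
      have hgpos : 0 < Nat.gcd a b := Nat.gcd_pos_of_pos_left _ ha
      have hgb : Nat.gcd a b ∣ (b - a) := Nat.dvd_sub hgdvd_b hgdvd_a
      have hgle : Nat.gcd a b ≤ b - a := Nat.le_of_dvd hba hgb
      have hper' : Per f A (A + (L - a)) (b - a) := by
        intro i hAi hib
        have h1 : f i = f (i + b) := hpb i hAi (by omega)
        have h2 : f (i + (b - a)) = f (i + (b - a) + a) := hpa (i + (b - a)) (by omega) (by omega)
        rw [h1, h2]; congr 1; omega
      have hpa' : Per f A (A + (L - a)) a := per_mono hpa le_rfl (by omega)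
      have hrec := ih (a + (b - a)) (by omega) a (b - a) A (L - a) le_rfl ha hba (by omega) hpa' hper'
      rw [hg] at hrec
      exact ext hgpos ha hgdvd_a hpa hrec le_rfl (by omega) (by omega)
    · subst hab; rw [Nat.gcd_self]; exact hpa
    · have hg : Nat.gcd b (a - b) = Nat.gcd a b := by
        conv_rhs => rw [show a = (a - b) + b by omega, Nat.gcd_comm]
        rw [Nat.gcd_add_self_right]
      have hba : 0 < a - b := by omega
      have hgdvd_a : Nat.gcd a b ∣ a := Nat.gcd_dvd_left a b
      have hgdvd_b : Nat.gcd a b ∣ b := Nat.gcd_dvd_right a b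
      have hgpos : 0 < Nat.gcd a b := Nat.gcd_pos_of_pos_left _ ha
      have hgb : Nat.gcd a b ∣ (a - b) := Nat.dvd_sub hgdvd_a hgdvd_b
      have hgle : Nat.gcd a b ≤ a - b := Nat.le_of_dvd hba hgb
      have hper' : Per f A (A + (L - b)) (a - b) := by
        intro i hAi hib
        have h1 : f i = f (i + a) := hpa i hAi (by omega)
        have h2 : f (i + (a - b)) = f (i + (a - b) + b) := hpb (i + (a - b)) (by omega) (by omega)
        rw [h1, h2]; congr 1; omega
      have hpb' : Per f A (A + (L - b)) b := per_mono hpb le_rfl (by omega)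
      have hrec := ih (b + (a - b)) (by omega) b (a - b) A (L - b) le_rfl hb hba (by omega) hpb' hper'
      rw [hg] at hrec
      exact ext hgpos hb (hg ▸ Nat.gcd_dvd_left b (a - b)) hpb hrec le_rfl (by omega) (by omega)

/-- Refinement: a `G`-periodic region with a window of links of shift `S`
gets period `gcd G S`. -/
lemma refine {f : ℕ → β} {b0 b1 G S x0 lam : ℕ} (hG : 0 < G) (hS : 0 < S)
    (hperG : Per f b0 b1 G)
    (hlinks : ∀ x, x0 ≤ x → x < x0 + lam → f x = f (x + S))
    (hb : b0 ≤ x0) (hxS : x0 + lam + S ≤ b1)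
    (hlam : G ≤ lam + Nat.gcd G S) : Per f b0 b1 (Nat.gcd G S) := by
  rcases Nat.eq_zero_or_pos (S % G) with hmu | hmu
  · have hGS : Nat.gcd G S = G := Nat.gcd_eq_left (Nat.dvd_of_mod_eq_zero hmu)
    rw [hGS]; exact hperG
  · have hμG : S % G < G := Nat.mod_lt _ hG
    have hgcd : Nat.gcd G S = Nat.gcd (S % G) G := Nat.gcd_rec G S
    have hμS : S % G ≤ S := Nat.mod_le _ _
    have hlinks2 : Per f x0 (x0 + lam + S % G) (S % G) := by
      intro x hx hxb
      have h1 : f x = f (x + S) := hlinks x hx (by omega)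
      have h2 : f (x + S % G) = f (x + S) := by
        apply per_resid hperG hG (x + S % G) (x + S) (by omega) (by omega) (by omega) (by omega)
        rw [Nat.add_mod x (S % G) G, Nat.add_mod x S G, Nat.mod_mod_of_dvd _ (dvd_refl G)]
      rw [h1, ← h2]
    have hperG' : Per f x0 (x0 + (lam + S % G)) G := per_mono hperG hb (by omega)
    have hfw := fw (S % G + G) (S % G) G x0 (lam + S % G) le_rfl hmu hG
      (by rw [← hgcd]; omega) (by rw [show x0 + (lam + S % G) = x0 + lam + S % G by omega]; exact hlinks2) hperG'
    have hgpos : 0 < Nat.gcd (S % G) G := Nat.gcd_pos_of_pos_left _ hmu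
    have hgdvd : Nat.gcd (S % G) G ∣ G := Nat.gcd_dvd_right _ _
    have hgleμ : Nat.gcd (S % G) G ≤ S % G := Nat.le_of_dvd hmu (Nat.gcd_dvd_left _ _)
    rw [hgcd]
    exact ext hgpos hG hgdvd hperG hfw hb (by omega) (by omega)

lemma mod_add_dvd {g t y : ℕ} (h : g ∣ t) : y % g = (y + t) % g := by
  obtain ⟨k, hk⟩ := h
  rw [hk, Nat.add_mul_mod_self_left]

/-- The core combinatorial lemma. -/
lemma core {f : ℕ → β} {p q m : ℕ}
    (hp : 0 < p) (hpq : p < q) (hq2 : q < 2 * p)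
    (hm : 0 < m) (hq2m : q ≤ 2 * m) (hm2p : m < 2 * p) (hmp : m ≠ p) (hmq : m ≠ q)
    (HA : ∀ i, i + p < 2 * p → f i = f (i + p))
    (HB : ∀ i, i + q < 2 * q → f i = f (i + q))
    (HC : ∀ i, 0 < i → i + m < 2 * m + 1 → f i = f (i + m)) :
    (∃ o, 0 < o ∧ ∀ j, j < 2 * p → f j = f (j + o)) ∨
    (∃ o, 0 < o ∧ ∀ j, j < 2 * m → f (1 + j) = f (1 + j + o)) := by
  set e := q - p with he
  have he1 : 0 < e := by omega
  have hep : e < p := by omega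
  -- period e on [0, p)
  have per4 : Per f 0 p e := by
    intro j _ hj
    have h1 : f j = f (j + q) := HB j (by omega)
    have h2 : f (j + e) = f (j + e + p) := HA (j + e) (by omega)
    rw [show j + e + p = j + q by omega] at h2
    rw [h1, h2]
  -- period e on the block [p, p + q)
  have block1e : Per f p (p + q) e := by
    intro i hpi hie
    have hi2p : i < 2 * p := by omega
    have h1 : f (i - p) = f i := by
      have := HA (i - p) (by omega)
      rwa [Nat.sub_add_cancel (by omega)] at this
    rcases lt_or_ge (i + e) (2 * p) with hlt | hge
    · have h2 : f (i - p) = f (i - p + e) := per4 (i - p) (by omega) (by omega)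
      have h3 : f (i - p + e) = f (i - p + e + p) := HA (i - p + e) (by omega)
      rw [show i - p + e + p = i + e by omega] at h3
      rw [← h1, h2, h3]
    · have h2 : f (i - p) = f (i - p + q) := HB (i - p) (by omega)
      rw [show i - p + q = i + e by omega] at h2
      rw [← h1, h2]
  rcases lt_trichotomy m q with hmltq | h | hqltm
  · -- CASE m < q : x-witness with offset d = q - m
    set d := q - m with hd
    have hd1 : 0 < d := by omega
    have hdm : d ≤ m := by omega
    have hdp : d < p := by omega
    have alpha : Per f 0 (m + 1) d := by
      intro j _ hj
      have h1 : f j = f (j + q) := HB j (by omega)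
      have h2 : f (j + d) = f (j + d + m) := HC (j + d) (by omega) (by omega)
      rw [show j + d + m = j + q by omega] at h2
      rw [h1, h2]
    have beta : Per f (m + 1) (m + q + 1) d := by
      intro j hj1 hj2
      have h1 : f (j - m) = f j := by
        have := HC (j - m) (by omega) (by omega)
        rwa [Nat.sub_add_cancel (by omega)] at this
      have h2 : f (j - m) = f (j - m + q) := HB (j - m) (by omega)
      rw [show j - m + q = j + d by omega] at h2
      rw [← h1, h2]
    set G := Nat.gcd e d with hG
    have hGpos : 0 < G := Nat.gcd_pos_of_pos_left _ he1
    have hGe : G ∣ e := Nat.gcd_dvd_left _ _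
    have hGd : G ∣ d := Nat.gcd_dvd_right _ _
    have hGele : G ≤ e := Nat.le_of_dvd he1 hGe
    have hGdle : G ≤ d := Nat.le_of_dvd hd1 hGd
    -- period G on the block [p, p+q)
    have blockG : Per f p (p + q) G := by
      rcases lt_or_gt_of_ne hmp with hmltp | hpltm
      · -- m < p : FW on [p, m+q+1)
        have perd : Per f p (m + q + 1) d := per_mono beta (by omega) le_rfl
        have pere : Per f p (m + q + 1) e := per_mono block1e le_rfl (by omega)
        have hfw := fw (e + d) e d p (m + q + 1 - p) le_rfl he1 hd1
          (by rw [← hG]; omega)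
          (by rw [show p + (m + q + 1 - p) = m + q + 1 by omega]; exact pere)
          (by rw [show p + (m + q + 1 - p) = m + q + 1 by omega]; exact perd)
        rw [show p + (m + q + 1 - p) = m + q + 1 by omega, ← hG] at hfw
        exact ext hGpos he1 hGe block1e hfw le_rfl (by omega) (by omega)
      · -- p < m : FW on [m+1, p+q)
        have perd : Per f (m + 1) (p + q) d := per_mono beta le_rfl (by omega)
        have pere : Per f (m + 1) (p + q) e := per_mono block1e (by omega) le_rfl
        have hfw := fw (e + d) e d (m + 1) (p + q - (m + 1)) le_rfl he1 hd1
          (by rw [← hG]; omega)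
          (by rw [show m + 1 + (p + q - (m + 1)) = p + q by omega]; exact pere)
          (by rw [show m + 1 + (p + q - (m + 1)) = p + q by omega]; exact perd)
        rw [show m + 1 + (p + q - (m + 1)) = p + q by omega, ← hG] at hfw
        exact ext hGpos he1 hGe block1e hfw (by omega) (by omega) le_rfl
    -- refinement to g₂ = gcd G m on the block
    have blockg2 : Per f p (p + q) (Nat.gcd G m) := by
      rcases lt_or_gt_of_ne hmp with hmltp | hpltm
      · -- m < p : links from conjugated window [p+1, 2p-m)
        have hGpm : G ∣ p - m := by
          have : p - m = d - e := by omega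
          rw [this]; exact Nat.dvd_sub hGd hGe
        have hGpmle : G ≤ p - m := Nat.le_of_dvd (by omega) hGpm
        have hlinks : ∀ x, p + 1 ≤ x → x < p + 1 + (p - m - 1) → f x = f (x + m) := by
          intro x hx1 hx2
          have h1 : f (x - p) = f x := by
            have := HA (x - p) (by omega)
            rwa [Nat.sub_add_cancel (by omega)] at this
          have h2 : f (x - p) = f (x - p + m) := HC (x - p) (by omega) (by omega)
          have h3 : f (x - p + m) = f (x - p + m + p) := HA (x - p + m) (by omega)
          rw [show x - p + m + p = x + m by omega] at h3
          rw [← h1, h2, h3]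
        have := refine hGpos hm blockG hlinks (by omega) (by omega)
          (by have : 0 < Nat.gcd G m := Nat.gcd_pos_of_pos_left _ hGpos; omega)
        exact this
      · -- p < m : direct links window [p, p + min (m+1-p) d)
        have hGmp : G ∣ m - p := by
          have : m - p = e - d := by omega
          rw [this]; exact Nat.dvd_sub hGe hGd
        have hGmple : G ≤ m - p := Nat.le_of_dvd (by omega) hGmp
        have l1 : min (m + 1 - p) d ≤ m + 1 - p := Nat.min_le_left _ _
        have l2 : min (m + 1 - p) d ≤ d := Nat.min_le_right _ _
        have lG : G ≤ min (m + 1 - p) d := le_min (by omega) hGdle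
        have hlinks : ∀ x, p ≤ x → x < p + min (m + 1 - p) d → f x = f (x + m) := by
          intro x hx1 hx2
          exact HC x (by omega) (by omega)
        have := refine hGpos hm blockG hlinks le_rfl (by omega) (by omega)
        exact this
    have hg2pos : 0 < Nat.gcd G m := Nat.gcd_pos_of_pos_left _ hGpos
    have hg2d : Nat.gcd G m ∣ d := dvd_trans (Nat.gcd_dvd_left _ _) hGd
    have hg2m : Nat.gcd G m ∣ m := Nat.gcd_dvd_right _ _
    have hg2p : Nat.gcd G m ∣ p := by
      rcases lt_or_gt_of_ne hmp with hmltp | hpltm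
      · have h1 : Nat.gcd G m ∣ p - m := dvd_trans (Nat.gcd_dvd_left _ _)
          (by have : p - m = d - e := by omega
              rw [this]; exact Nat.dvd_sub hGd hGe)
        have := Nat.dvd_add h1 hg2m
        rwa [show p - m + m = p by omega] at this
      · have h1 : Nat.gcd G m ∣ m - p := dvd_trans (Nat.gcd_dvd_left _ _)
          (by have : m - p = e - d := by omega
              rw [this]; exact Nat.dvd_sub hGe hGd)
        have := Nat.dvd_sub hg2m h1
        rwa [show m - (m - p) = p by omega] at this
    -- assemble the x-witness
    right
    refine ⟨d, hd1, ?_⟩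
    intro j hj
    set j' := 1 + j with hj'
    have hj'1 : 1 ≤ j' := by omega
    have hj'2m : j' ≤ 2 * m := by omega
    show f j' = f (j' + d)
    rcases le_or_gt j' m with hjm | hjm
    · rcases le_or_gt p j' with hpj | hpj
      · -- both in block
        exact per_resid blockg2 hg2pos j' (j' + d) hpj (by omega) (by omega) (by omega)
          (mod_add_dvd hg2d)
      · rcases le_or_gt p (j' + d) with hpd | hpd
        · -- straddling: lift left endpoint
          have h1 : f j' = f (j' + p) := HA j' (by omega)
          have h2 : f (j' + d) = f (j' + p) := by
            apply per_resid blockg2 hg2pos (j' + d) (j' + p) hpd (by omega) (by omega) (by omega)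
            have : j' + p = (j' + d) + (p - d) := by omega
            rw [this]
            exact mod_add_dvd (Nat.dvd_sub hg2p hg2d)
          rw [h1, h2]
        · -- both below p : lift both
          have h1 : f j' = f (j' + p) := HA j' (by omega)
          have h2 : f (j' + d) = f (j' + d + p) := HA (j' + d) (by omega)
          have h3 : f (j' + p) = f (j' + d + p) := by
            apply per_resid blockg2 hg2pos (j' + p) (j' + d + p) (by omega) (by omega)
              (by omega) (by omega)
            rw [show j' + d + p = (j' + p) + d by omega]
            exact mod_add_dvd hg2d
          rw [h1, h2, h3]
    · -- j' > m : beta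
      exact beta j' (by omega) (by omega)
  · exact absurd h hmq
  · -- CASE q < m : u-witness with offset d' = m - q
    set d' := m - q with hd'
    have hd1 : 0 < d' := by omega
    have hd'p : d' < p := by omega
    have dbeta : Per f (q + 1) (2 * q + d') d' := by
      intro i hi1 hi2
      have h1 : f (i - q) = f i := by
        have := HB (i - q) (by omega)
        rwa [Nat.sub_add_cancel (by omega)] at this
      have h2 : f (i - q) = f (i - q + m) := HC (i - q) (by omega) (by omega)
      rw [show i - q + m = i + d' by omega] at h2
      rw [← h1, h2]
    set G := Nat.gcd e d' with hG
    have hGpos : 0 < G := Nat.gcd_pos_of_pos_left _ he1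
    have hGe : G ∣ e := Nat.gcd_dvd_left _ _
    have hGd : G ∣ d' := Nat.gcd_dvd_right _ _
    have hGele : G ≤ e := Nat.le_of_dvd he1 hGe
    have hGdle : G ≤ d' := Nat.le_of_dvd hd1 hGd
    have blockG : Per f p (p + q) G := by
      have perd : Per f (q + 1) (p + q) d' := per_mono dbeta le_rfl (by omega)
      have pere : Per f (q + 1) (p + q) e := per_mono block1e (by omega) le_rfl
      have hfw := fw (e + d') e d' (q + 1) (p - 1) le_rfl he1 hd1
        (by rw [← hG]; omega)
        (by rw [show q + 1 + (p - 1) = p + q by omega]; exact pere)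
        (by rw [show q + 1 + (p - 1) = p + q by omega]; exact perd)
      rw [show q + 1 + (p - 1) = p + q by omega, ← hG] at hfw
      exact ext hGpos he1 hGe block1e hfw (by omega) (by omega) le_rfl
    -- refinement with shift S = p - d'
    have hGmp : G ∣ m - p := by
      have : m - p = e + d' := by omega
      rw [this]; exact Nat.dvd_add hGe hGd
    have blockg2 : Per f p (p + q) (Nat.gcd G m) := by
      have l1 : min d' e ≤ d' := Nat.min_le_left _ _
      have l2 : min d' e ≤ e := Nat.min_le_right _ _
      have lG : G ≤ min d' e := le_min hGdle hGele
      have hlinks : ∀ x, p ≤ x → x < p + min d' e → f x = f (x + (p - d')) := by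
        intro x hx1 hx2
        have h1 : f x = f (x + q) := HB x (by omega)
        have h2 : f (x - d') = f (x - d' + m) := HC (x - d') (by omega) (by omega)
        rw [show x - d' + m = x + q by omega] at h2
        have h3 : f (x - d') = f (x - d' + p) := HA (x - d') (by omega)
        rw [show x - d' + p = x + (p - d') by omega] at h3
        rw [h1, ← h2, h3]
      have hrefine := refine hGpos (by omega : 0 < p - d') blockG hlinks le_rfl (by omega)
        (by omega)
      have hgcdeq : Nat.gcd G (p - d') = Nat.gcd G m := by
        obtain ⟨k, hk⟩ := Nat.dvd_add hGe (Nat.dvd_add hGd hGd)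
        rw [Nat.mul_comm] at hk
        have hmeq : m = (p - d') + k * G := by omega
        rw [hmeq, Nat.gcd_add_mul_right_right]
      rwa [hgcdeq] at hrefine
    have hg2pos : 0 < Nat.gcd G m := Nat.gcd_pos_of_pos_left _ hGpos
    have hg2d : Nat.gcd G m ∣ d' := dvd_trans (Nat.gcd_dvd_left _ _) hGd
    have hg2m : Nat.gcd G m ∣ m := Nat.gcd_dvd_right _ _
    have hg2p : Nat.gcd G m ∣ p := by
      have h1 : Nat.gcd G m ∣ m - p := dvd_trans (Nat.gcd_dvd_left _ _) hGmp
      have := Nat.dvd_sub hg2m h1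
      rwa [show m - (m - p) = p by omega] at this
    left
    refine ⟨d', hd1, ?_⟩
    intro j hj
    rcases lt_or_ge q j with hqj | hjq
    · -- j > q : direct chain
      have h1 : f (j - q) = f j := by
        have := HB (j - q) (by omega)
        rwa [Nat.sub_add_cancel (by omega)] at this
      have h2 : f (j - q) = f (j - q + m) := HC (j - q) (by omega) (by omega)
      rw [show j - q + m = j + d' by omega] at h2
      rw [← h1, h2]
    · rcases le_or_gt p j with hpj | hpj
      · exact per_resid blockg2 hg2pos j (j + d') hpj (by omega) (by omega) (by omega)
          (mod_add_dvd hg2d)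
      · rcases le_or_gt p (j + d') with hpd | hpd
        · have h1 : f j = f (j + p) := HA j (by omega)
          have h2 : f (j + d') = f (j + p) := by
            apply per_resid blockg2 hg2pos (j + d') (j + p) hpd (by omega) (by omega) (by omega)
            rw [show j + p = (j + d') + (p - d') by omega]
            exact mod_add_dvd (Nat.dvd_sub hg2p hg2d)
          rw [h1, h2]
        · have h1 : f j = f (j + p) := HA j (by omega)
          have h2 : f (j + d') = f (j + d' + p) := HA (j + d') (by omega)
          have h3 : f (j + p) = f (j + d' + p) := by
            apply per_resid blockg2 hg2pos (j + p) (j + d' + p) (by omega) (by omega)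
              (by omega) (by omega)
            rw [show j + d' + p = (j + p) + d' by omega]
            exact mod_add_dvd hg2d
          rw [h1, h2, h3]



end SqCore
lemma occursAt_getElem? {α : Type*} {y w : List α} {n : ℕ} (h : OccursAt y w (n + 1)) :
    ∀ t, t < y.length → w[n + t]? = y[t]? := by
  obtain ⟨a, b, hw, ha⟩ := h
  have han : a.length = n := by omega
  intro t ht
  subst hw
  rw [List.append_assoc]
  rw [List.getElem?_append_right (by omega), show n + t - a.length = t by omega,
      List.getElem?_append_left ht]

lemma getElem?_occursAt {α : Type*} {y w : List α} {n : ℕ} (hy : y ≠ [])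
    (h : ∀ t, t < y.length → w[n + t]? = y[t]?) : OccursAt y w (n + 1) := by
  have hylen : 0 < y.length := List.length_pos_iff.mpr hy
  have hlen : n + y.length ≤ w.length := by
    have ht := h (y.length - 1) (by omega)
    rw [List.getElem?_eq_getElem (l := y) (i := y.length - 1) (by omega)] at ht
    obtain ⟨hlt, -⟩ := List.getElem?_eq_some_iff.mp ht
    omega
  refine ⟨w.take n, w.drop (n + y.length), ?_, by rw [List.length_take]; omega⟩
  apply List.ext_getElem?
  intro k
  have hlt : (w.take n).length = n := by rw [List.length_take]; omega
  rcases lt_or_ge k n with hk | hk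
  · rw [List.getElem?_append_left (by rw [List.length_append, hlt]; omega),
        List.getElem?_append_left (by omega : k < (w.take n).length),
        List.getElem?_take, if_pos hk]
  · rcases lt_or_ge k (n + y.length) with hk2 | hk2
    · rw [List.getElem?_append_left (by rw [List.length_append, hlt]; omega),
          List.getElem?_append_right (by omega : (w.take n).length ≤ k), hlt]
      rw [← h (k - n) (by omega), show n + (k - n) = k by omega]
    · rw [List.getElem?_append_right (by rw [List.length_append, hlt]; omega),
          List.getElem?_drop, List.length_append, hlt]
      congr 1
      omega

lemma sq_shift {α : Type*} (y : List α) {j : ℕ} (hj : j + y.length < 2 * y.length) :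
    (y ++ y)[j]? = (y ++ y)[j + y.length]? := by
  have hjy : j < y.length := by omega
  rw [List.getElem?_append_left hjy, List.getElem?_append_right (by omega),
      show j + y.length - y.length = j by omega]

section MainProof
open SqCore

/-- If (u,U) is an FS-double-square beginning at position i and x² is a square with last
    occurrence beginning at position i+1, then |x| ∈ {|u|, |U|} or |x| ≥ 2|u|. -/
theorem stmt17 {α : Type*} (w u U x : List α) (i : ℕ)
    (hu : u ≠ []) (hU : U ≠ []) (hx : x ≠ []) (hlt : u.length < U.length)
    (hui : LastOccAt (u ++ u) w i) (hUi : LastOccAt (U ++ U) w i)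
    (hxi : LastOccAt (x ++ x) w (i + 1)) :
    x.length = u.length ∨ x.length = U.length ∨ 2 * u.length ≤ x.length := by
  by_cases h1 : x.length = u.length
  · exact Or.inl h1
  by_cases h2 : x.length = U.length
  · exact Or.inr (Or.inl h2)
  by_cases h3 : 2 * u.length ≤ x.length
  · exact Or.inr (Or.inr h3)
  exfalso
  set p := u.length with hp'
  set q := U.length with hq'
  set m := x.length with hm'
  have hp : 0 < p := List.length_pos_iff.mpr hu
  have hm : 0 < m := List.length_pos_iff.mpr hx
  obtain ⟨hOu, hulast⟩ := hui
  obtain ⟨hOU, hUlast⟩ := hUi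
  obtain ⟨hOx, hxlast⟩ := hxi
  obtain ⟨a, b, hw, hai⟩ := hOu
  set s := a.length with hs'
  have hi : i = s + 1 := by omega
  -- getElem? views of the three occurrences
  have Hu : ∀ t, t < (u ++ u).length → w[s + t]? = (u ++ u)[t]? :=
    occursAt_getElem? (n := s) (by rw [← hi] at *; exact ⟨a, b, hw, hai⟩)
  have HU : ∀ t, t < (U ++ U).length → w[s + t]? = (U ++ U)[t]? := by
    apply occursAt_getElem? (n := s)
    rw [show s + 1 = i from hi.symm]
    exact hOU
  have Hx : ∀ t, t < (x ++ x).length → w[s + 1 + t]? = (x ++ x)[t]? := by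
    apply occursAt_getElem? (n := s + 1)
    rw [show s + 1 + 1 = i + 1 by omega]
    exact hOx
  have hlu : (u ++ u).length = 2 * p := by simp [List.length_append]; omega
  have hlU : (U ++ U).length = 2 * q := by simp [List.length_append]; omega
  have hlx : (x ++ x).length = 2 * m := by simp [List.length_append]; omega
  -- the function
  set f : ℕ → Option α := fun j => w[s + j]? with hf
  have HA : ∀ j, j + p < 2 * p → f j = f (j + p) := by
    intro j hj
    show w[s + j]? = w[s + (j + p)]?
    rw [Hu j (by omega), Hu (j + p) (by omega)]
    exact sq_shift u (by omega)
  have HB : ∀ j, j + q < 2 * q → f j = f (j + q) := by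
    intro j hj
    show w[s + j]? = w[s + (j + q)]?
    rw [HU j (by omega), HU (j + q) (by omega)]
    exact sq_shift U (by omega)
  have HC : ∀ j, 0 < j → j + m < 2 * m + 1 → f j = f (j + m) := by
    intro j hj0 hj
    show w[s + j]? = w[s + (j + m)]?
    rw [show s + j = s + 1 + (j - 1) by omega, show s + (j + m) = s + 1 + (j - 1 + m) by omega]
    rw [Hx (j - 1) (by omega), Hx (j - 1 + m) (by omega)]
    exact sq_shift x (by omega)
  -- contradiction builders
  have contra_u : ∀ o, 0 < o → (∀ j, j < 2 * p → f j = f (j + o)) → False := by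
    intro o ho hwit
    have hocc : OccursAt (u ++ u) w (s + o + 1) := by
      apply getElem?_occursAt (by simp [hu])
      intro t ht
      rw [show s + o + t = s + (t + o) by omega]
      have h := (hwit t (by omega)).symm
      simp only [hf] at h
      rw [h]
      exact Hu t ht
    have := hulast _ hocc
    omega
  have contra_x : ∀ o, 0 < o → (∀ j, j < 2 * m → f (1 + j) = f (1 + j + o)) → False := by
    intro o ho hwit
    have hocc : OccursAt (x ++ x) w (s + 1 + o + 1) := by
      apply getElem?_occursAt (by simp [hx])
      intro t ht
      rw [show s + 1 + o + t = s + (1 + t + o) by omega]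
      have h := (hwit t (by omega)).symm
      simp only [hf] at h
      rw [h, show s + (1 + t) = s + 1 + t by omega]
      exact Hx t ht
    have := hxlast _ hocc
    omega
  -- main case analysis
  have hpq : p < q := hlt
  rcases le_or_gt (2 * p) q with hq2p | hq2p
  · -- q ≥ 2p : uu reoccurs at offset q
    exact contra_u q (by omega) (fun j hj => HB j (by omega))
  rcases lt_or_ge (2 * m) q with h2mq | h2mq
  · -- 2m < q : xx reoccurs at offset q
    exact contra_x q (by omega) (fun j hj => HB (1 + j) (by omega))
  rcases core hp hpq hq2p hm h2mq (by omega) (fun h => h1 (by omega)) (fun h => h2 (by omega))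
      HA HB HC with ⟨o, ho, hwit⟩ | ⟨o, ho, hwit⟩
  · exact contra_u o ho hwit
  · exact contra_x o ho hwit

end MainProof
end

section
/- Let m ≥ 1 and suppose positions 1 through m of a word are all FS-double-square-positions with FS-double-squares (u_i, U_i) satisfying |u_1| = ⋯ = |u_m| and |U_1| = ⋯ = |U_m|. Then for all i in [1..m]: |U_i| + m ≤ 2|u_i|, |U_i| ≥ |u_i| + m + 1, and consequently |U_i| ≥ 3m + 2 and |u_i| ≥ 2m + 1. -/
variable {α : Type*}

section FS18Aux

variable {α : Type*}

private lemma fs18_occursAt_iff {x w : List α} {a : ℕ} :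
    OccursAt x w (a + 1) ↔ a + x.length ≤ w.length ∧ x = (w.drop a).take x.length := by
  constructor
  · rintro ⟨u, v, rfl, hu⟩
    have hu' : u.length = a := by omega
    subst hu'
    constructor
    · simp only [List.length_append]; omega
    · rw [List.append_assoc, List.drop_left, List.take_left]
  · rintro ⟨hlen, hx⟩
    have key : x ++ (w.drop a).drop x.length = w.drop a := by
      conv_rhs => rw [← List.take_append_drop x.length (w.drop a)]
      rw [← hx]
    refine ⟨w.take a, (w.drop a).drop x.length, ?_, ?_⟩
    · conv_lhs => rw [← List.take_append_drop a w, ← key]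
      rw [← List.append_assoc]
    · rw [List.length_take]; omega

private lemma fs18_len' {x w : List α} {i : ℕ} (h : OccursAt x w i) :
    i - 1 + x.length ≤ w.length := by
  obtain ⟨u', v, rfl, hl⟩ := h
  simp only [List.length_append]
  omega

private lemma fs18_occ_getElem {x w : List α} {a : ℕ} (h : OccursAt x w (a + 1)) :
    ∀ j < x.length, w[a + j]? = x[j]? := by
  obtain ⟨-, hx⟩ := fs18_occursAt_iff.mp h
  intro j hj
  conv_rhs => rw [hx]
  rw [List.getElem?_take, if_pos hj, List.getElem?_drop]

private lemma fs18_sq_period {y w : List α} {a : ℕ} (h : OccursAt (y ++ y) w (a + 1)) :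
    ∀ j < y.length, w[a + j]? = w[a + y.length + j]? := by
  intro j hj
  have h1 := fs18_occ_getElem h j (by simp only [List.length_append]; omega)
  have h2 := fs18_occ_getElem h (y.length + j) (by simp only [List.length_append]; omega)
  have e1 : (y ++ y)[j]? = y[j]? := by rw [List.getElem?_append, if_pos hj]
  have e2 : (y ++ y)[y.length + j]? = y[j]? := by
    rw [List.getElem?_append_right (Nat.le_add_right _ _), Nat.add_sub_cancel_left]
  have h2' : w[a + y.length + j]? = y[j]? := by
    rw [Nat.add_assoc, h2, e2]
  rw [h1, e1, h2']

private lemma fs18_period (w : List α) (m L : ℕ) (hm : 1 ≤ m) (hL : 1 ≤ L) (y : ℕ → List α)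
    (hlen : ∀ i, 1 ≤ i → i ≤ m → (y i).length = L)
    (hocc : ∀ i, 1 ≤ i → i ≤ m → OccursAt (y i ++ y i) w i) :
    ∀ t, t + 2 ≤ L + m → w[t]? = w[t + L]? := by
  intro t ht
  have h1 : 1 ≤ min t (m - 1) + 1 := by omega
  have h2 : min t (m - 1) + 1 ≤ m := by omega
  have hper := fs18_sq_period (hocc _ h1 h2)
  rw [hlen _ h1 h2] at hper
  have h3 := hper (t - min t (m - 1)) (by omega)
  have e1 : min t (m - 1) + (t - min t (m - 1)) = t := by omega
  have e2 : min t (m - 1) + L + (t - min t (m - 1)) = t + L := by omega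
  rwa [e1, e2] at h3

private lemma fs18_shift {x w : List α} {b : ℕ} (h0 : OccursAt x w 1)
    (hb : b + x.length ≤ w.length)
    (hpt : ∀ j < x.length, w[j]? = w[b + j]?) : OccursAt x w (b + 1) := by
  have h0' : OccursAt x w (0 + 1) := h0
  obtain ⟨-, hx0⟩ := fs18_occursAt_iff.mp h0'
  refine fs18_occursAt_iff.mpr ⟨hb, List.ext_getElem? fun n => ?_⟩
  by_cases hn : n < x.length
  · rw [List.getElem?_take, if_pos hn, List.getElem?_drop]
    conv_lhs => rw [hx0]
    rw [List.getElem?_take, if_pos hn, List.getElem?_drop, Nat.zero_add]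
    exact hpt n hn
  · rw [List.getElem?_take, if_neg hn]
    conv_lhs => rw [hx0]
    rw [List.getElem?_take, if_neg hn]

private def fs18red (d x : ℕ) : ℕ := (x - 1) % d + 1

private lemma fs18red_pos (d x : ℕ) : 1 ≤ fs18red d x := Nat.le_add_left 1 _

private lemma fs18red_le {d : ℕ} (hd : 1 ≤ d) (x : ℕ) : fs18red d x ≤ d := by
  have := Nat.mod_lt (x - 1) (show 0 < d by omega)
  unfold fs18red
  omega

private lemma fs18red_mod {d : ℕ} (hd : 1 ≤ d) {x : ℕ} (hx : 1 ≤ x) :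
    x % d = fs18red d x % d := by
  unfold fs18red
  conv_lhs => rw [← Nat.sub_add_cancel hx]
  exact (Nat.ModEq.add_right 1 (Nat.mod_modEq (x - 1) d)).symm

private lemma fs18red_eq_iff {d : ℕ} (hd : 1 ≤ d) {x : ℕ} (hx : 1 ≤ x) :
    fs18red d x = d ↔ x % d = 0 := by
  constructor
  · intro h
    rw [fs18red_mod hd hx, h, Nat.mod_self]
  · intro h
    have h1 := fs18red_mod hd hx
    rw [h] at h1
    have h2 := fs18red_le hd x
    have h3 := fs18red_pos d x
    rcases Nat.lt_or_ge (fs18red d x) d with h4 | h4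
    · rw [Nat.mod_eq_of_lt h4] at h1; omega
    · omega

private lemma fs18red_congr {d : ℕ} (hd : 1 ≤ d) {x y : ℕ} (hx : 1 ≤ x) (hy : 1 ≤ y)
    (h : x % d = y % d) : fs18red d x = fs18red d y := by
  have h1 := fs18red_mod hd hx
  have h2 := fs18red_mod hd hy
  have h3 : fs18red d x % d = fs18red d y % d := by rw [← h1, ← h2]; exact h
  have lex := fs18red_le hd x
  have ley := fs18red_le hd y
  have px := fs18red_pos d x
  have py := fs18red_pos d y
  rcases Nat.lt_or_ge (fs18red d x) d with h4 | h4 <;>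
    rcases Nat.lt_or_ge (fs18red d y) d with h5 | h5
  · rwa [Nat.mod_eq_of_lt h4, Nat.mod_eq_of_lt h5] at h3
  · have hy' : fs18red d y = d := by omega
    rw [hy', Nat.mod_self, Nat.mod_eq_of_lt h4] at h3
    omega
  · have hx' : fs18red d x = d := by omega
    rw [hx', Nat.mod_self, Nat.mod_eq_of_lt h5] at h3
    omega
  · omega

private lemma fs18_key {β : Type*} (f : ℕ → β) (p d m : ℕ)
    (hp : 1 ≤ p) (hd : 1 ≤ d) (hdm : d ≤ m)
    (Hp : ∀ t, t + 2 ≤ p + m → f t = f (t + p))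
    (Hd : ∀ t, t + 2 ≤ 2 * p + m → t ≠ p - 1 → f t = f (t + d)) :
    f (p - 1) = f (p - 1 + d) := by
  have hm : 1 ≤ m := le_trans hd hdm
  have R : ∀ x, 1 ≤ x → x + 1 ≤ p + m + d → f (p - 1 + x) = f (p - 1 + fs18red d x) := by
    intro x
    induction x using Nat.strong_induction_on with
    | _ x ih =>
      intro hx1 hx2
      by_cases hxd : x ≤ d
      · have hx : fs18red d x = x := by
          unfold fs18red
          rw [Nat.mod_eq_of_lt (by omega)]
          omega
        rw [hx]
      · push_neg at hxd
        have hstep : f (p - 1 + (x - d)) = f (p - 1 + (x - d) + d) :=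
          Hd (p - 1 + (x - d)) (by omega) (by omega)
        have e : p - 1 + (x - d) + d = p - 1 + x := by omega
        rw [e] at hstep
        have hmodeq : x % d = (x - d) % d := by
          conv_lhs => rw [← Nat.sub_add_cancel (le_of_lt hxd)]
          rw [Nat.add_mod_right]
        have hr : fs18red d (x - d) = fs18red d x :=
          fs18red_congr hd (by omega) (by omega) hmodeq.symm
        calc f (p - 1 + x) = f (p - 1 + (x - d)) := hstep.symm
          _ = f (p - 1 + fs18red d (x - d)) := ih (x - d) (by omega) (by omega) (by omega)
          _ = f (p - 1 + fs18red d x) := by rw [hr]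
  have F : ∀ t, 1 ≤ t → t ≤ m - 1 → f (p - 1 + t) = f (p - 1 + fs18red d (t + p)) := by
    intro t ht1 ht2
    have h1 : f (p - 1 + t) = f (p - 1 + t + p) := Hp (p - 1 + t) (by omega)
    have h2 : f (p - 1 + (t + p)) = f (p - 1 + fs18red d (t + p)) :=
      R (t + p) (by omega) (by omega)
    rw [show p - 1 + (t + p) = p - 1 + t + p from by omega] at h2
    exact h1.trans h2
  obtain ⟨g, d', p', hg0, hd', hp', hco⟩ :
      ∃ g d' p', 0 < g ∧ d = g * d' ∧ p = g * p' ∧ Nat.Coprime d' p' := by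
    refine ⟨Nat.gcd d p, d / Nat.gcd d p, p / Nat.gcd d p,
      Nat.gcd_pos_of_pos_left _ (by omega), ?_, ?_, ?_⟩
    · exact (Nat.mul_div_cancel' (Nat.gcd_dvd_left d p)).symm
    · exact (Nat.mul_div_cancel' (Nat.gcd_dvd_right d p)).symm
    · exact Nat.coprime_div_gcd_div_gcd (Nat.gcd_pos_of_pos_left _ (by omega))
  have hd'1 : 1 ≤ d' := by
    rcases Nat.eq_zero_or_pos d' with h | h
    · rw [h, Nat.mul_zero] at hd'; omega
    · exact h
  have hLp : d ∣ d' * p := ⟨p', by rw [hd', hp']; ring⟩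
  have hmin : ∀ j, 1 ≤ j → d ∣ j * p → d' ≤ j := by
    intro j hj hdvd
    have h2 : g * d' ∣ g * (j * p') := by
      rw [← hd', show g * (j * p') = j * p from by rw [hp']; ring]
      exact hdvd
    have h1 : d' ∣ j * p' := (Nat.mul_dvd_mul_iff_left hg0).mp h2
    exact Nat.le_of_dvd (by omega) (hco.dvd_of_dvd_mul_right h1)
  have chain : ∀ c, c < d' → f (p - 1 + fs18red d ((d' - c) * p)) = f (p - 1 + d) := by
    intro c
    induction c with
    | zero =>
      intro _
      have hpos : 1 ≤ d' * p := Nat.mul_pos hd'1 hp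
      have hmod : (d' * p) % d = 0 := by
        obtain ⟨k, hk⟩ := hLp
        rw [hk]
        exact Nat.mul_mod_right d k
      have hrd : fs18red d (d' * p) = d := (fs18red_eq_iff hd hpos).mpr hmod
      rw [Nat.sub_zero, hrd]
    | succ c ih =>
      intro hc
      have hj1 : 1 ≤ d' - (c + 1) := by omega
      have hppos : 1 ≤ (d' - (c + 1)) * p := Nat.mul_pos (by omega) hp
      have hnd : ¬ d ∣ (d' - (c + 1)) * p := by
        intro h
        have := hmin _ hj1 h
        omega
      have ht1 := fs18red_pos d ((d' - (c + 1)) * p)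
      have htd := fs18red_le hd ((d' - (c + 1)) * p)
      have htne : fs18red d ((d' - (c + 1)) * p) ≠ d := by
        intro h
        exact hnd (Nat.dvd_of_mod_eq_zero ((fs18red_eq_iff hd hppos).mp h))
      have hF := F _ ht1 (by omega)
      have hcong : fs18red d (fs18red d ((d' - (c + 1)) * p) + p)
          = fs18red d ((d' - c) * p) := by
        apply fs18red_congr hd (by omega) (Nat.mul_pos (by omega) hp)
        have h1 : Nat.ModEq d (fs18red d ((d' - (c + 1)) * p)) ((d' - (c + 1)) * p) :=
          (fs18red_mod hd hppos).symm
        have h2 := h1.add_right p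
        have h3 : (d' - (c + 1)) * p + p = (d' - c) * p := by
          rw [show (d' - c) = (d' - (c + 1)) + 1 from by omega, Nat.add_mul, Nat.one_mul]
        rw [h3] at h2
        exact h2
      rw [hcong] at hF
      exact hF.trans (ih (by omega))
  have h1 : f (p - 1) = f (p - 1 + p) := Hp (p - 1) (by omega)
  have h2 : f (p - 1 + p) = f (p - 1 + fs18red d p) := R p (by omega) (by omega)
  have h3 := chain (d' - 1) (by omega)
  rw [show d' - (d' - 1) = 1 from by omega, Nat.one_mul] at h3
  exact (h1.trans h2).trans h3

end FS18Aux


/-- If positions 1..m are FS-double-square-positions with FS-double-squares (uᵢ, Uᵢ) of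
    preserved lengths, then |Uᵢ| + m ≤ 2|uᵢ|, |Uᵢ| ≥ |uᵢ| + m + 1, |Uᵢ| ≥ 3m+2 and
    |uᵢ| ≥ 2m+1. -/
theorem stmt18 {α : Type*} (w : List α) (m : ℕ) (hm : 1 ≤ m)
    (u U : ℕ → List α)
    (hu : ∀ i, 1 ≤ i → i ≤ m → u i ≠ [])
    (hlt : ∀ i, 1 ≤ i → i ≤ m → (u i).length < (U i).length)
    (hlastu : ∀ i, 1 ≤ i → i ≤ m → LastOccAt (u i ++ u i) w i)
    (hlastU : ∀ i, 1 ≤ i → i ≤ m → LastOccAt (U i ++ U i) w i)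
    (hequ : ∀ i, 1 ≤ i → i ≤ m → (u i).length = (u 1).length)
    (heqU : ∀ i, 1 ≤ i → i ≤ m → (U i).length = (U 1).length) :
    ∀ i, 1 ≤ i → i ≤ m →
      (U i).length + m ≤ 2 * (u i).length ∧
      (u i).length + m + 1 ≤ (U i).length ∧
      3 * m + 2 ≤ (U i).length ∧
      2 * m + 1 ≤ (u i).length := by
  set p := (u 1).length with hp
  set P := (U 1).length with hP
  have hp1 : 1 ≤ p := by
    rw [hp]
    exact List.length_pos_iff.mpr (hu 1 le_rfl hm)
  have hpP : p < P := by
    rw [hp, hP]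
    exact hlt 1 le_rfl hm
  have houcc : ∀ i, 1 ≤ i → i ≤ m → OccursAt (u i ++ u i) w i :=
    fun i h1 h2 => (hlastu i h1 h2).1
  have hUocc : ∀ i, 1 ≤ i → i ≤ m → OccursAt (U i ++ U i) w i :=
    fun i h1 h2 => (hlastU i h1 h2).1
  have hwlen : m - 1 + 2 * P ≤ w.length := by
    have h := fs18_len' (hUocc m hm le_rfl)
    rw [List.length_append, heqU m hm le_rfl] at h
    omega
  have periodp : ∀ t, t + 2 ≤ p + m → w[t]? = w[t + p]? :=
    fs18_period w m p hm hp1 u hequ houcc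
  have periodP : ∀ t, t + 2 ≤ P + m → w[t]? = w[t + P]? :=
    fs18_period w m P hm (by omega) U heqU hUocc
  have hu1 : OccursAt (u 1 ++ u 1) w 1 := houcc 1 le_rfl hm
  have hu1len : (u 1 ++ u 1).length = 2 * p := by
    rw [List.length_append, ← hp]; omega
  -- Claim 1 : P + m ≤ 2 * p
  have hc1 : P + m ≤ 2 * p := by
    by_contra hcon
    push_neg at hcon
    have hocc' : OccursAt (u 1 ++ u 1) w (P + 1) := by
      apply fs18_shift hu1
      · rw [hu1len]; omega
      · intro j hj
        rw [hu1len] at hj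
        have h := periodP j (by omega)
        rwa [Nat.add_comm j P] at h
    have := (hlastu 1 le_rfl hm).2 _ hocc'
    omega
  -- Claim 2 : p + m + 1 ≤ P
  have hc2 : p + m + 1 ≤ P := by
    by_contra hcon
    push_neg at hcon
    set d := P - p with hdd
    have hd1 : 1 ≤ d := by omega
    have hdm : d ≤ m := by omega
    have hPd : P = p + d := by omega
    have periodd : ∀ t, t + 2 ≤ 2 * p + m → t ≠ p - 1 → w[t]? = w[t + d]? := by
      intro t ht htne
      rcases Nat.lt_or_ge t (p - 1) with hcase | hcase
      · have e1 := periodP t (by omega)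
        have e2 := periodp (t + d) (by omega)
        rw [e1, show t + P = t + d + p from by omega]
        exact e2.symm
      · have hge : p ≤ t := by omega
        have e1 := periodp (t - p) (by omega)
        have e2 := periodP (t - p) (by omega)
        calc w[t]? = w[t - p + p]? := by rw [Nat.sub_add_cancel hge]
          _ = w[t - p]? := e1.symm
          _ = w[t - p + P]? := e2
          _ = w[t + d]? := by rw [show t - p + P = t + d from by omega]
    have hole : w[p - 1]? = w[p - 1 + d]? :=
      fs18_key (fun k => w[k]?) p d m hp1 hd1 hdm
        (fun t ht => periodp t ht) (fun t ht htne => periodd t ht htne)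
    have periodd' : ∀ t, t + 2 ≤ 2 * p + m → w[t]? = w[t + d]? := by
      intro t ht
      by_cases h : t = p - 1
      · rw [h]; exact hole
      · exact periodd t ht h
    have hocc' : OccursAt (u 1 ++ u 1) w (d + 1) := by
      apply fs18_shift hu1
      · rw [hu1len]; omega
      · intro j hj
        rw [hu1len] at hj
        have h := periodd' j (by omega)
        rwa [Nat.add_comm j d] at h
    have := (hlastu 1 le_rfl hm).2 _ hocc'
    omega
  intro i hi1 hi2
  rw [hequ i hi1 hi2, heqU i hi1 hi2]
  exact ⟨by omega, by omega, by omega, by omega⟩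
end
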